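/- arXiv:0812.2458 — 9 statements merged into one kernel-verified Lean document; each statement's English description precedes it below -/
import Mathlib

section
/- For any COD construction G_a defined recursively by G_1 = [[x_1, -x_2*],[x_2, x_1*]] and G_a = [[G_{a-1}, -x_{a+1}* I_{2^{a-1}}],[x_{a+1} I_{2^{a-1}}, G_{a-1}^H]], the fraction of zero entries in the 2^a × 2^a matrix G_a equals (2^a - a - 1)/2^a. -/
/-- The recursive Alamouti-type complex orthogonal design `G_a`.
`Gmat a i j` is the `(i,j)` entry of the `2^a × 2^a` design (indices `< 2^a` are
meaningful), viewed as a function of the complex variables `x 0, …, x a`.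
The base case `a = 0` is the `1×1` matrix `[x 0]`, and
`G_{a+1} = [[G_a, -x_{a+1}* I],[x_{a+1} I, G_a^H]]`. -/
noncomputable def Gmat : ℕ → ℕ → ℕ → ((ℕ → ℂ) → ℂ)
  | 0, i, j => if i = 0 ∧ j = 0 then (fun x => x 0) else 0
  | (a+1), i, j =>
      if i < 2 ^ a then
        if j < 2 ^ a then Gmat a i j
        else if j = i + 2 ^ a then (fun x => -(starRingEnd ℂ) (x (a+1))) else 0
      else
        if j < 2 ^ a then (if i = j + 2 ^ a then (fun x => x (a+1)) else 0)
        else fun x => (starRingEnd ℂ) (Gmat a (j - 2 ^ a) (i - 2 ^ a) x)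


lemma xor_two_pow_of_lt {x a : ℕ} (h : x < 2 ^ a) : x ^^^ 2 ^ a = x + 2 ^ a := by
  apply Nat.eq_of_testBit_eq
  intro j
  have hx2 : x + 2 ^ a = 2 ^ a * 1 + x := by ring
  rw [Nat.testBit_xor, hx2, Nat.testBit_two_pow_mul_add 1 h j]
  rcases lt_or_ge j a with hj | hj
  · rw [if_pos hj, Nat.testBit_two_pow_of_ne (by omega)]
    simp
  · have hx : x.testBit j = false :=
      Nat.testBit_lt_two_pow (lt_of_lt_of_le h (Nat.pow_le_pow_right (by norm_num) hj))
    rw [if_neg (by omega), hx, Nat.testBit_two_pow]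
    rcases eq_or_ne j a with rfl | hne
    · simp [Nat.testBit_one_eq_true_iff_self_eq_zero]
    · have : j - a ≠ 0 := by omega
      rw [Nat.testBit_lt_two_pow (x := 1) (by have := Nat.one_lt_two_pow_iff (n := j - a); omega)]
      simp [Ne.symm hne]

lemma xor_add_two_pow {x y a : ℕ} (hx : x < 2 ^ a) (hy : y < 2 ^ a) :
    x ^^^ (y + 2 ^ a) = (x ^^^ y) + 2 ^ a := by
  rw [← xor_two_pow_of_lt hy, ← Nat.xor_assoc, xor_two_pow_of_lt (Nat.xor_lt_two_pow hx hy)]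

lemma xor_add_add_two_pow {x y a : ℕ} (hx : x < 2 ^ a) (hy : y < 2 ^ a) :
    (x + 2 ^ a) ^^^ (y + 2 ^ a) = x ^^^ y := by
  rw [← xor_two_pow_of_lt hy, ← xor_two_pow_of_lt hx]
  rw [Nat.xor_assoc, Nat.xor_comm (2 ^ a), xor_cancel_right]



lemma conj_fun_eq_zero (f : (ℕ → ℂ) → ℂ) :
    (fun x => (starRingEnd ℂ) (f x)) = (0 : (ℕ → ℂ) → ℂ) ↔ f = 0 := by
  constructor
  · intro h
    funext x
    have := congrFun h x
    simpa using this
  · intro h; subst h; funext x; simp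

lemma Gmat_ne_zero_iff : ∀ a i j, i < 2 ^ a → j < 2 ^ a →
    (Gmat a i j ≠ 0 ↔ (i = j ∨ ∃ k < a, i ^^^ j = 2 ^ k))
  | 0, i, j, hi, hj => by
    interval_cases i
    interval_cases j
    have hne : Gmat 0 0 0 ≠ 0 := by
      intro h
      have := congrFun h (fun _ => 1)
      simp [Gmat] at this
    simp [hne]
  | (a+1), i, j, hi, hj => by
    have h2 : (2:ℕ) ^ a < 2 ^ (a+1) := by
      have : (2:ℕ) ^ a > 0 := Nat.pow_pos (by norm_num)
      simpa [pow_succ] using by omega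
    by_cases hia : i < 2 ^ a <;> by_cases hja : j < 2 ^ a
    · -- top-left block
      have hxor : i ^^^ j < 2 ^ a := Nat.xor_lt_two_pow hia hja
      simp only [Gmat, if_pos hia, if_pos hja]
      rw [Gmat_ne_zero_iff a i j hia hja]
      constructor
      · rintro (h | ⟨k, hk, he⟩)
        · exact Or.inl h
        · exact Or.inr ⟨k, by omega, he⟩
      · rintro (h | ⟨k, hk, he⟩)
        · exact Or.inl h
        · refine Or.inr ⟨k, ?_, he⟩
          rcases Nat.lt_succ_iff_lt_or_eq.mp hk with h' | rfl
          · exact h'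
          · omega
    · -- top-right block
      simp only [Gmat, if_pos hia, if_neg hja]
      by_cases hje : j = i + 2 ^ a
      · rw [if_pos hje]
        subst hje
        have hne : (fun x : ℕ → ℂ => -(starRingEnd ℂ) (x (a+1))) ≠ 0 := by
          intro h
          have := congrFun h (fun _ => 1)
          simp at this
        refine iff_of_true hne (Or.inr ⟨a, by omega, ?_⟩)
        rw [xor_add_two_pow hia hia]
        simp
      · rw [if_neg hje]
        have hj' : j - 2 ^ a < 2 ^ a := by omega
        have hrw : j = (j - 2 ^ a) + 2 ^ a := by omega
        constructor
        · intro h; exact absurd rfl h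
        · rintro (h | ⟨k, hk, he⟩) <;> intro _
          · omega
          · rw [hrw, xor_add_two_pow hia hj'] at he
            have hne0 : i ^^^ (j - 2 ^ a) ≠ 0 := (by rw [ne_eq, xor_eq_zero_iff]; omega)
            have hlt : i ^^^ (j - 2 ^ a) < 2 ^ a := Nat.xor_lt_two_pow hia hj'
            have hpk : (2:ℕ) ^ k ≤ 2 ^ a := Nat.pow_le_pow_right (by norm_num) (by omega)
            omega
    · -- bottom-left block
      simp only [Gmat, if_neg hia, if_pos hja]
      by_cases hie : i = j + 2 ^ a
      · rw [if_pos hie]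
        subst hie
        have hne : (fun x : ℕ → ℂ => x (a+1)) ≠ 0 := by
          intro h
          have := congrFun h (fun _ => 1)
          simp at this
        refine iff_of_true hne (Or.inr ⟨a, by omega, ?_⟩)
        rw [Nat.xor_comm, xor_add_two_pow hja hja]
        simp
      · rw [if_neg hie]
        have hi' : i - 2 ^ a < 2 ^ a := by omega
        have hrw : i = (i - 2 ^ a) + 2 ^ a := by omega
        constructor
        · intro h; exact absurd rfl h
        · rintro (h | ⟨k, hk, he⟩) <;> intro _
          · omega
          · rw [Nat.xor_comm, hrw, xor_add_two_pow hja hi'] at he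
            have hne0 : j ^^^ (i - 2 ^ a) ≠ 0 := (by rw [ne_eq, xor_eq_zero_iff]; omega)
            have hlt : j ^^^ (i - 2 ^ a) < 2 ^ a := Nat.xor_lt_two_pow hja hi'
            have hpk : (2:ℕ) ^ k ≤ 2 ^ a := Nat.pow_le_pow_right (by norm_num) (by omega)
            omega
    · -- bottom-right block
      simp only [Gmat, if_neg hia, if_neg hja]
      have hi' : i - 2 ^ a < 2 ^ a := by omega
      have hj' : j - 2 ^ a < 2 ^ a := by omega
      rw [ne_eq, conj_fun_eq_zero, ← ne_eq, Gmat_ne_zero_iff a _ _ hj' hi']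
      have hxeq : i ^^^ j = (j - 2 ^ a) ^^^ (i - 2 ^ a) := by
        have hri : i = (i - 2 ^ a) + 2 ^ a := by omega
        have hrj : j = (j - 2 ^ a) + 2 ^ a := by omega
        conv_lhs => rw [hri, hrj]
        rw [xor_add_add_two_pow hi' hj', Nat.xor_comm]
      have hxor : (j - 2 ^ a) ^^^ (i - 2 ^ a) < 2 ^ a := Nat.xor_lt_two_pow hj' hi'
      constructor
      · rintro (h | ⟨k, hk, he⟩)
        · exact Or.inl (by omega)
        · exact Or.inr ⟨k, by omega, by rw [hxeq]; exact he⟩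
      · rintro (h | ⟨k, hk, he⟩)
        · exact Or.inl (by omega)
        · rw [hxeq] at he
          refine Or.inr ⟨k, ?_, he⟩
          have hpk : k ≠ a := by
            rintro rfl; omega
          omega


/-- the number of identically-zero entries of the `2^a × 2^a` design
`G_a` is `2^a * (2^a - a - 1)`, i.e. the fraction of zero entries is
`(2^a - a - 1)/2^a`. -/
theorem fraction_of_zeros_Gmat (a : ℕ) (ha : 1 ≤ a) :
    Set.ncard {p : Fin (2 ^ a) × Fin (2 ^ a) | Gmat a (p.1 : ℕ) (p.2 : ℕ) = 0} =
      2 ^ a * (2 ^ a - a - 1) := by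
  classical
  -- the exponent map
  set v : Fin (a + 1) → ℕ := fun k => if (k : ℕ) = 0 then 0 else 2 ^ ((k : ℕ) - 1) with hv
  have hv_lt : ∀ k : Fin (a + 1), v k < 2 ^ a := by
    intro k
    simp only [hv]
    split
    · exact Nat.pow_pos (by norm_num)
    · exact Nat.pow_lt_pow_right (by norm_num) (by omega)
  have hv_inj : Function.Injective v := by
    intro k k' h
    simp only [hv] at h
    split_ifs at h with h1 h2 h2
    · exact Fin.ext (by omega)
    · exact absurd h.symm (Nat.pow_pos (by norm_num)).ne'
    · exact absurd h (Nat.pow_pos (by norm_num)).ne'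
    · have := Nat.pow_right_injective (le_refl 2) h
      exact Fin.ext (by omega)
  set φ : Fin (2 ^ a) × Fin (a + 1) → Fin (2 ^ a) × Fin (2 ^ a) :=
    fun p => (p.1, ⟨(p.1 : ℕ) ^^^ v p.2, Nat.xor_lt_two_pow p.1.isLt (hv_lt p.2)⟩) with hφ
  have hφinj : Function.Injective φ := by
    rintro ⟨i, k⟩ ⟨i', k'⟩ h
    simp only [hφ, Prod.mk.injEq, Fin.mk.injEq] at h
    obtain ⟨h1, h2⟩ := h
    subst h1
    rw [Nat.xor_right_inj] at h2
    exact Prod.ext rfl (hv_inj h2)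
  have hset : {p : Fin (2 ^ a) × Fin (2 ^ a) | Gmat a (p.1 : ℕ) (p.2 : ℕ) = 0} =
      (Set.range φ)ᶜ := by
    ext p
    simp only [Set.mem_setOf_eq, Set.mem_compl_iff, Set.mem_range]
    rw [← not_ne_iff (a := Gmat a (p.1 : ℕ) (p.2 : ℕ))]
    apply not_congr
    rw [Gmat_ne_zero_iff a _ _ p.1.isLt p.2.isLt]
    constructor
    · rintro (h | ⟨k, hk, he⟩)
      · refine ⟨(p.1, ⟨0, by omega⟩), ?_⟩
        simp only [hφ, hv]
        ext
        · rfl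
        · simpa using h
      · refine ⟨(p.1, ⟨k + 1, by omega⟩), ?_⟩
        simp only [hφ, hv]
        ext
        · rfl
        · simp only [Fin.val_mk, Nat.add_sub_cancel, if_neg (Nat.succ_ne_zero k)]
          rw [← he, xor_cancel_left]
    · rintro ⟨⟨i, k⟩, rfl⟩
      simp only [hφ, Fin.val_mk]
      rcases eq_or_ne (k : ℕ) 0 with hk0 | hk0
      · left
        simp [hv, hk0, show k = 0 from Fin.ext (by simpa using hk0)]
      · right
        refine ⟨(k : ℕ) - 1, by omega, ?_⟩
        rw [xor_cancel_left]
        simp [hv, hk0, show k ≠ 0 from fun h => hk0 (by simp [h])]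
  rw [hset]
  have hrange : (Set.range φ).ncard = 2 ^ a * (a + 1) := by
    rw [← Set.image_univ, Set.ncard_image_of_injective _ hφinj, Set.ncard_univ]
    simp
  have htot := Set.ncard_add_ncard_compl (Set.range φ)
  rw [hrange] at htot
  have huniv : Nat.card (Fin (2 ^ a) × Fin (2 ^ a)) = 2 ^ a * 2 ^ a := by simp
  rw [huniv] at htot
  have hle : a + 1 ≤ 2 ^ a := Nat.lt_two_pow_self
  have hdist : 2 ^ a * (2 ^ a - a - 1) + 2 ^ a * (a + 1) = 2 ^ a * 2 ^ a := by
    rw [← Nat.mul_add]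
    congr 1
    omega
  omega
end

section
/- In the matrix G_a (defined by the recursive Alamouti-type construction), each row and each column contains exactly a+1 non-zero entries. -/
open scoped Classical


open Finset

lemma var_ne_zero (k : ℕ) : (fun x : ℕ → ℂ => x k) ≠ 0 := by
  intro h
  have := congrFun h (fun _ => 1)
  simp at this

lemma negconj_ne_zero (k : ℕ) : (fun x : ℕ → ℂ => -(starRingEnd ℂ) (x k)) ≠ 0 := by
  intro h
  have := congrFun h (fun _ => 1)
  simp at this

lemma conj_comp_ne_zero (f : (ℕ → ℂ) → ℂ) :
    (fun x => (starRingEnd ℂ) (f x)) ≠ 0 ↔ f ≠ 0 := by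
  constructor
  · intro h hf; subst hf; exact h (by funext x; simp)
  · intro hf h
    apply hf
    funext x
    have := congrFun h x
    simpa using this

lemma card_split (n : ℕ) (p : ℕ → Prop) [DecidablePred p] :
    ((range (n + n)).filter p).card
      = ((range n).filter p).card + (((Ico n (n + n))).filter p).card := by
  rw [range_eq_Ico, range_eq_Ico, ← Finset.Ico_union_Ico_eq_Ico (Nat.zero_le n) (Nat.le_add_right n n),
    filter_union, card_union_of_disjoint]
  exact (Finset.Ico_disjoint_Ico_consecutive 0 n (n + n)).mono
    (filter_subset p _) (filter_subset p _)

lemma Ico_card_shift (n : ℕ) (p : ℕ → Prop) [DecidablePred p] :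
    ((Ico n (n + n)).filter (fun j => p (j - n))).card
      = ((range n).filter p).card := by
  have h : Ico n (n + n) = (range n).image (· + n) := by
    rw [range_eq_Ico, Finset.image_add_right_Ico]
    simp [Nat.add_comm]
  rw [h, Finset.filter_image]
  rw [Finset.card_image_of_injective _ (add_left_injective n)]
  congr 1
  apply filter_congr
  intro j hj
  simp

lemma singleton_card (s : Finset ℕ) (c : ℕ) (hc : c ∈ s) :
    (s.filter (fun j => j = c)).card = 1 := by
  rw [Finset.filter_eq', if_pos hc, Finset.card_singleton]

lemma key : ∀ a : ℕ,
    (∀ i < 2 ^ a, ((range (2 ^ a)).filter (fun j => Gmat a i j ≠ 0)).card = a + 1) ∧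
    (∀ j < 2 ^ a, ((range (2 ^ a)).filter (fun i => Gmat a i j ≠ 0)).card = a + 1) := by
  intro a
  induction a with
  | zero =>
      constructor <;> intro i hi <;>
      · interval_cases i
        simp [Gmat, var_ne_zero 0, Finset.filter_eq']
  | succ a ih =>
      obtain ⟨ihr, ihc⟩ := ih
      have h2 : 2 ^ (a + 1) = 2 ^ a + 2 ^ a := by ring
      constructor
      · intro i hi
        rw [h2, card_split]
        by_cases hia : i < 2 ^ a
        · have e1 : (range (2 ^ a)).filter (fun j => Gmat (a+1) i j ≠ 0)
              = (range (2 ^ a)).filter (fun j => Gmat a i j ≠ 0) := by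
            apply filter_congr
            intro j hj
            rw [mem_range] at hj
            simp [Gmat, hia, hj]
          have e2 : (Ico (2 ^ a) (2 ^ a + 2 ^ a)).filter (fun j => Gmat (a+1) i j ≠ 0)
              = (Ico (2 ^ a) (2 ^ a + 2 ^ a)).filter (fun j => j = i + 2 ^ a) := by
            apply filter_congr
            intro j hj
            rw [mem_Ico] at hj
            have hj' : ¬ j < 2 ^ a := by omega
            simp only [Gmat, if_pos hia, if_neg hj']
            by_cases hji : j = i + 2 ^ a
            · simp [hji, negconj_ne_zero (a+1)]
            · simp [hji]
          rw [e1, e2, ihr i hia, singleton_card _ _ (by rw [mem_Ico]; omega)]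
        · have hi2 : i - 2 ^ a < 2 ^ a := by omega
          have e1 : (range (2 ^ a)).filter (fun j => Gmat (a+1) i j ≠ 0)
              = (range (2 ^ a)).filter (fun j => j = i - 2 ^ a) := by
            apply filter_congr
            intro j hj
            rw [mem_range] at hj
            simp only [Gmat, if_neg hia, if_pos hj]
            by_cases hij : i = j + 2 ^ a
            · have h' : j = i - 2 ^ a := by omega
              rw [if_pos hij]
              exact iff_of_true (var_ne_zero (a+1)) h'
            · have : ¬ j = i - 2 ^ a := by omega
              simp [hij, this]
          have e2 : (Ico (2 ^ a) (2 ^ a + 2 ^ a)).filter (fun j => Gmat (a+1) i j ≠ 0)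
              = (Ico (2 ^ a) (2 ^ a + 2 ^ a)).filter
                  (fun j => Gmat a (j - 2 ^ a) (i - 2 ^ a) ≠ 0) := by
            apply filter_congr
            intro j hj
            rw [mem_Ico] at hj
            have hj' : ¬ j < 2 ^ a := by omega
            simp only [Gmat, if_neg hia, if_neg hj']
            exact conj_comp_ne_zero _
          rw [e1, e2, Ico_card_shift (2 ^ a) (fun t => Gmat a t (i - 2 ^ a) ≠ 0),
            singleton_card _ _ (by rw [mem_range]; omega), ihc _ hi2]
          omega
      · intro j hj
        rw [h2, card_split]
        by_cases hja : j < 2 ^ a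
        · have e1 : (range (2 ^ a)).filter (fun i => Gmat (a+1) i j ≠ 0)
              = (range (2 ^ a)).filter (fun i => Gmat a i j ≠ 0) := by
            apply filter_congr
            intro i hi
            rw [mem_range] at hi
            simp [Gmat, hja, hi]
          have e2 : (Ico (2 ^ a) (2 ^ a + 2 ^ a)).filter (fun i => Gmat (a+1) i j ≠ 0)
              = (Ico (2 ^ a) (2 ^ a + 2 ^ a)).filter (fun i => i = j + 2 ^ a) := by
            apply filter_congr
            intro i hi
            rw [mem_Ico] at hi
            have hi' : ¬ i < 2 ^ a := by omega
            simp only [Gmat, if_neg hi', if_pos hja]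
            by_cases hij : i = j + 2 ^ a
            · simp [hij, var_ne_zero (a+1)]
            · simp [hij]
          rw [e1, e2, ihc j hja, singleton_card _ _ (by rw [mem_Ico]; omega)]
        · have hj2 : j - 2 ^ a < 2 ^ a := by omega
          have e1 : (range (2 ^ a)).filter (fun i => Gmat (a+1) i j ≠ 0)
              = (range (2 ^ a)).filter (fun i => i = j - 2 ^ a) := by
            apply filter_congr
            intro i hi
            rw [mem_range] at hi
            simp only [Gmat, if_pos hi, if_neg hja]
            by_cases hji : j = i + 2 ^ a
            · have h' : i = j - 2 ^ a := by omega
              rw [if_pos hji]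
              exact iff_of_true (negconj_ne_zero (a+1)) h'
            · have : ¬ i = j - 2 ^ a := by omega
              simp [hji, this]
          have e2 : (Ico (2 ^ a) (2 ^ a + 2 ^ a)).filter (fun i => Gmat (a+1) i j ≠ 0)
              = (Ico (2 ^ a) (2 ^ a + 2 ^ a)).filter
                  (fun i => Gmat a (j - 2 ^ a) (i - 2 ^ a) ≠ 0) := by
            apply filter_congr
            intro i hi
            rw [mem_Ico] at hi
            have hi' : ¬ i < 2 ^ a := by omega
            simp only [Gmat, if_neg hi', if_neg hja]
            exact conj_comp_ne_zero _
          rw [e1, e2, Ico_card_shift (2 ^ a) (fun t => Gmat a (j - 2 ^ a) t ≠ 0),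
            singleton_card _ _ (by rw [mem_range]; omega), ihr _ hj2]
          omega

/-- each row and each column of `G_a` contains exactly `a+1`
non-zero entries. -/
theorem rows_cols_nonzero_Gmat (a : ℕ) (ha : 1 ≤ a) :
    (∀ i : Fin (2 ^ a),
        Set.ncard {j : Fin (2 ^ a) | Gmat a (i : ℕ) (j : ℕ) ≠ 0} = a + 1) ∧
    (∀ j : Fin (2 ^ a),
        Set.ncard {i : Fin (2 ^ a) | Gmat a (i : ℕ) (j : ℕ) ≠ 0} = a + 1) :=by
  obtain ⟨hr, hc⟩ := key a
  have main : ∀ (p : ℕ → Prop) [DecidablePred p], ((range (2 ^ a)).filter p).card = a + 1 →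
      Set.ncard {k : Fin (2 ^ a) | p (k : ℕ)} = a + 1 := by
    intro p _ hp
    rw [show {k : Fin (2 ^ a) | p (k : ℕ)} = ↑(Finset.univ.filter (fun k : Fin (2 ^ a) => p k)) by
      ext k; simp]
    rw [Set.ncard_coe_finset, ← hp]
    refine Finset.card_bij (fun k _ => (k : ℕ)) ?_ ?_ ?_
    · intro k hk; simp at hk ⊢; first | exact hk | exact ⟨k.isLt, hk⟩
    · intro k₁ _ k₂ _ h; exact Fin.ext h
    · intro n hn; simp at hn; exact ⟨⟨n, hn.1⟩, by simp [hn.2], rfl⟩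
  exact ⟨fun i => main (fun j => Gmat a (i : ℕ) j ≠ 0) (hr i i.isLt),
    fun j => main (fun i => Gmat a i (j : ℕ) ≠ 0) (hc j j.isLt)⟩
end

section
/- For the matrix G_a defined recursively, the set N_i of column indices of the non-zero entries in row i (0-indexed, indices identified with binary vectors in F_2^a) equals {i} ∪ {i ⊕ 2^j : j = 0,...,a-1}, where ⊕ denotes bitwise XOR. -/
lemma xor_two_pow_eq_add {a x : ℕ} (h : x < 2 ^ a) : x ^^^ 2 ^ a = x + 2 ^ a := by
  apply Nat.eq_of_testBit_eq
  intro j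
  rcases lt_trichotomy j a with hj | hj | hj
  · rw [Nat.testBit_xor, Nat.testBit_two_pow, add_comm,
      Nat.testBit_two_pow_add_gt hj]
    simp [Nat.ne_of_gt hj]
  · subst hj
    rw [Nat.testBit_xor, Nat.testBit_two_pow, add_comm, Nat.testBit_two_pow_add_eq,
      Nat.testBit_lt_two_pow h]
    simp
  · have h1 : x + 2 ^ a < 2 ^ j := by
      calc x + 2 ^ a < 2 ^ a + 2 ^ a := by omega
      _ = 2 ^ (a + 1) := by ring
      _ ≤ 2 ^ j := Nat.pow_le_pow_right (by norm_num) hj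
    rw [Nat.testBit_xor, Nat.testBit_two_pow, Nat.testBit_lt_two_pow h1,
      Nat.testBit_lt_two_pow (lt_trans h (Nat.pow_lt_pow_right (by norm_num) hj))]
    simp [Nat.ne_of_lt hj]

lemma two_pow_lt {a k : ℕ} (hk : k < a) : 2 ^ k < 2 ^ a :=
  Nat.pow_lt_pow_right (by norm_num) hk

lemma add_xor_pow {a x k : ℕ} (hx : x < 2 ^ a) (hk : k < a) :
    (x + 2 ^ a) ^^^ 2 ^ k = (x ^^^ 2 ^ k) + 2 ^ a := by
  have h1 : x ^^^ 2 ^ k < 2 ^ a := Nat.xor_lt_two_pow hx (two_pow_lt hk)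
  rw [← xor_two_pow_eq_add hx, ← xor_two_pow_eq_add h1, Nat.xor_assoc,
    Nat.xor_comm (2 ^ a) (2 ^ k), ← Nat.xor_assoc]

lemma xor_symm {i j m : ℕ} (h : j = i ^^^ m) : i = j ^^^ m := by
  rw [h, Nat.xor_xor_cancel_right]

lemma Gmat_eq_zero : ∀ a i j, i < 2 ^ a → j < 2 ^ a → j ≠ i →
    (∀ k, k < a → j ≠ i ^^^ 2 ^ k) → Gmat a i j = 0 := by
  intro a
  induction a with
  | zero =>
    intro i j hi hj hne _
    interval_cases i <;> interval_cases j <;> simp at hne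
  | succ a ih =>
    intro i j hi hj hne hk
    have hpow : (2 : ℕ) ^ (a + 1) = 2 ^ a + 2 ^ a := by ring
    by_cases hi' : i < 2 ^ a <;> by_cases hj' : j < 2 ^ a
    · simp only [Gmat, if_pos hi', if_pos hj']
      exact ih i j hi' hj' hne (fun k hka => hk k (Nat.lt_succ_of_lt hka))
    · have hne2 : j ≠ i + 2 ^ a := by
        rw [← xor_two_pow_eq_add hi']
        exact hk a (Nat.lt_succ_self a)
      simp only [Gmat, if_pos hi', if_neg hj', if_neg hne2]
    · have hne2 : i ≠ j + 2 ^ a := by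
        intro h
        exact hk a (Nat.lt_succ_self a)
          (xor_symm (by rw [h, xor_two_pow_eq_add hj']))
      simp only [Gmat, if_neg hi', if_pos hj', if_neg hne2]
    · simp only [Gmat, if_neg hi', if_neg hj']
      have hij : i - 2 ^ a < 2 ^ a := by omega
      have hjj : j - 2 ^ a < 2 ^ a := by omega
      have key : Gmat a (j - 2 ^ a) (i - 2 ^ a) = 0 := by
        apply ih _ _ hjj hij (by omega)
        intro k hka h
        apply hk k (Nat.lt_succ_of_lt hka)
        have hj2 : j = (j - 2 ^ a) + 2 ^ a := by omega
        have h2 : j ^^^ 2 ^ k = i := by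
          rw [hj2, add_xor_pow hjj hka, ← h]; omega
        exact xor_symm h2.symm
      rw [key]
      funext x
      simp

lemma Gmat_ne_zero : ∀ a i j, i < 2 ^ a → j < 2 ^ a →
    (j = i ∨ ∃ k, k < a ∧ j = i ^^^ 2 ^ k) →
    Gmat a i j (fun _ => 1) ≠ 0 := by
  intro a
  induction a with
  | zero =>
    intro i j hi hj h
    interval_cases i <;> interval_cases j
    simp [Gmat]
  | succ a ih =>
    intro i j hi hj h
    have hpow : (2 : ℕ) ^ (a + 1) = 2 ^ a + 2 ^ a := by ring
    by_cases hi' : i < 2 ^ a <;> by_cases hj' : j < 2 ^ a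
    · simp only [Gmat, if_pos hi', if_pos hj']
      apply ih i j hi' hj'
      rcases h with h | ⟨k, hka, h⟩
      · exact Or.inl h
      · rcases Nat.lt_succ_iff_lt_or_eq.mp hka with hka | rfl
        · exact Or.inr ⟨k, hka, h⟩
        · rw [h, xor_two_pow_eq_add hi'] at hj'; omega
    · have hj2 : j = i + 2 ^ a := by
        rcases h with h | ⟨k, hka, h⟩
        · omega
        · rcases Nat.lt_succ_iff_lt_or_eq.mp hka with hka | rfl
          · exact absurd (h ▸ Nat.xor_lt_two_pow hi' (two_pow_lt hka)) hj'
          · rw [h, xor_two_pow_eq_add hi']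
      simp only [Gmat, if_pos hi', if_neg hj', if_pos hj2]
      simp
    · have hii : i - 2 ^ a < 2 ^ a := by omega
      have hi2 : i = (i - 2 ^ a) + 2 ^ a := by omega
      have hxa : i ^^^ 2 ^ a = i - 2 ^ a := by
        conv_lhs => rw [hi2]
        rw [← xor_two_pow_eq_add hii, Nat.xor_xor_cancel_right]
      have hi3 : i = j + 2 ^ a := by
        rcases h with h | ⟨k, hka, h⟩
        · omega
        · rcases Nat.lt_succ_iff_lt_or_eq.mp hka with hka | rfl
          · rw [hi2] at h
            rw [h, add_xor_pow hii hka] at hj'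
            omega
          · rw [h, hxa]; omega
      simp only [Gmat, if_neg hi', if_pos hj', if_pos hi3]
      simp
    · simp only [Gmat, if_neg hi', if_neg hj']
      have hii : i - 2 ^ a < 2 ^ a := by omega
      have hjj : j - 2 ^ a < 2 ^ a := by omega
      have hi2 : i = (i - 2 ^ a) + 2 ^ a := by omega
      have hxa : i ^^^ 2 ^ a = i - 2 ^ a := by
        conv_lhs => rw [hi2]
        rw [← xor_two_pow_eq_add hii, Nat.xor_xor_cancel_right]
      have key : Gmat a (j - 2 ^ a) (i - 2 ^ a) (fun _ => 1) ≠ 0 := by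
        apply ih _ _ hjj hii
        rcases h with h | ⟨k, hka, h⟩
        · exact Or.inl (by omega)
        · rcases Nat.lt_succ_iff_lt_or_eq.mp hka with hka | rfl
          · have h3 : j - 2 ^ a = (i - 2 ^ a) ^^^ 2 ^ k := by
              rw [hi2, add_xor_pow hii hka] at h
              omega
            exact Or.inr ⟨k, hka, xor_symm h3⟩
          · rw [h, hxa] at hj'; omega
      simpa using key

/-- the set of column indices of the non-zero entries in row `i` of
`G_a` is `{i} ∪ {i ⊕ 2^k : k = 0,…,a-1}`, where `⊕` is bitwise XOR. -/
theorem row_support_Gmat (a : ℕ) (ha : 1 ≤ a) (i : ℕ) (hi : i < 2 ^ a) :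
    {j : ℕ | j < 2 ^ a ∧ Gmat a i j ≠ 0} =
      ({i} : Set ℕ) ∪ {y : ℕ | ∃ k < a, y = i ^^^ 2 ^ k} := by
  ext j
  simp only [Set.mem_setOf_eq, Set.mem_union, Set.mem_singleton_iff]
  constructor
  · rintro ⟨hj, hne⟩
    by_contra hcon
    push_neg at hcon
    exact hne (Gmat_eq_zero a i j hi hj hcon.1 (fun k hk => hcon.2 k hk))
  · intro h
    have h' : j = i ∨ ∃ k, k < a ∧ j = i ^^^ 2 ^ k := by
      rcases h with h | ⟨k, hk, h⟩
      · exact Or.inl h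
      · exact Or.inr ⟨k, hk, h⟩
    have hj : j < 2 ^ a := by
      rcases h' with h | ⟨k, hk, h⟩
      · omega
      · exact h ▸ Nat.xor_lt_two_pow hi (two_pow_lt hk)
    refine ⟨hj, fun h0 => Gmat_ne_zero a i j hi hj h' ?_⟩
    rw [h0]
    rfl
end

section
/- Let a ≥ 2, b = ⌊log_2 a⌋ + 1, m = 2^b - a - 1, q = a - 2^{b-1}, M_a = {x : 0 < x ≤ a, x not a power of 2}, and g(x) = 2x if the (b-1)-th bit of x is 0, else 2x + 1 - 2^b. Let M̃_a = g(M_a). If a ∉ {2^b - 2, 2^b - 1}, then M̃_a \ M_a = {2⌈(a+1)/2⌉, 2(⌈(a+1)/2⌉+1), ..., 2(2^{b-1}-1)} and M_a \ M̃_a = {2q+3, 2q+5, ..., 2⌈a/2⌉ - 1}. -/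
open scoped Classical

noncomputable section

/-- `b = ⌊log₂ a⌋ + 1`. -/
def bb (a : ℕ) : ℕ := Nat.log 2 a + 1

/-- `m = 2^b - a - 1`. -/
def mm (a : ℕ) : ℕ := 2 ^ bb a - a - 1

/-- `q = a - 2^(b-1)`. -/
def qq (a : ℕ) : ℕ := a - 2 ^ (bb a - 1)

/-- `M_a = {x : 0 < x ≤ a, x is not a power of 2}`. -/
def Ma (a : ℕ) : Set ℕ := {x | 0 < x ∧ x ≤ a ∧ ¬ ∃ k, x = 2 ^ k}

/-- `g(x) = 2x` if bit `b-1` of `x` is `0`, else `g(x) = 2x + 1 - 2^b`. -/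
def gg (a x : ℕ) : ℕ := if x.testBit (bb a - 1) then 2 * x + 1 - 2 ^ bb a else 2 * x

/-- `f'(x) = x` if `x ∈ M_a`, else `f'(x) = x + 1 - 2⌈m/2⌉` (intended domain `g(M_a)`). -/
def ff' (a x : ℕ) : ℕ := if x ∈ Ma a then x else x + 1 - 2 * ((mm a + 1) / 2)

/-- `f = f' ∘ g`. -/
def ff (a x : ℕ) : ℕ := ff' a (gg a x)

/-- the `j`-th binary digit of `x`, as a natural number. -/
def bitv (x j : ℕ) : ℕ := if x.testBit j then 1 else 0

/-- `h(x) = 2^(f(x)-1) + Σ_{j=0}^{b-2} x_j 2^(2^(j+1)-1) + x_{b-1}`. -/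
def hh (a x : ℕ) : ℕ :=
  2 ^ (ff a x - 1) + (∑ j ∈ Finset.range (bb a - 1), bitv x j * 2 ^ (2 ^ (j + 1) - 1)) +
    bitv x (bb a - 1)

/-- Hamming weight of `x` viewed as a vector in `F_2^a`. -/
def wt (a x : ℕ) : ℕ := ((Finset.range a).filter (fun j => x.testBit j)).card

/-- identification of `Z_{2^a}` with `F_2^a` via radix-2 representation. -/
def toVec (a x : ℕ) : Fin a → ZMod 2 := fun j => if x.testBit (j : ℕ) then 1 else 0

/-- `S`, the `F_2`-span of `M_a' = h(M_a)` inside `F_2^a`. -/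
def Ssub (a : ℕ) : Submodule (ZMod 2) (Fin a → ZMod 2) :=
  Submodule.span (ZMod 2) (toVec a '' (hh a '' Ma a))

/-- `P_a = {0, 2^0, 2^1, …, 2^(a-1)}`. -/
def Pa (a : ℕ) : Set ℕ := {0} ∪ {y | ∃ j < a, y = 2 ^ j}

/-- `Q_a = ∅` if `a+1` is a power of `2`, else `{1 ⊕ 2^j : a-m ≤ j ≤ a-1}`. -/
def Qa (a : ℕ) : Set ℕ :=
  if ∃ k, a + 1 = 2 ^ k then ∅ else {y | ∃ j, a - mm a ≤ j ∧ j < a ∧ y = 1 ^^^ 2 ^ j}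

/-- `T_a = P_a ∪ Q_a`. -/
def Ta (a : ℕ) : Set ℕ := Pa a ∪ Qa a

end

/-- if `a ∉ {2^b - 2, 2^b - 1}` then
`g(M_a) \ M_a = {2⌈(a+1)/2⌉, …, 2(2^(b-1)-1)}` and
`M_a \ g(M_a) = {2q+3, 2q+5, …, 2⌈a/2⌉-1}`. -/
theorem Ha_Ja_description (a : ℕ) (ha : 2 ≤ a)
    (h1 : a ≠ 2 ^ bb a - 2) (h2 : a ≠ 2 ^ bb a - 1) :
    (gg a '' Ma a) \ Ma a = (fun t => 2 * t) '' Set.Icc ((a + 2) / 2) (2 ^ (bb a - 1) - 1) ∧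
    Ma a \ (gg a '' Ma a) = (fun t => 2 * t + 1) '' Set.Icc (qq a + 1) ((a + 1) / 2 - 1) := by
  have ha0 : a ≠ 0 := by omega
  set B := bb a with hBdef
  have hB2 : 2 ≤ B := by
    have h1 : 1 ≤ Nat.log 2 a := (Nat.le_log_iff_pow_le (by norm_num) ha0).2 (by simpa using ha)
    simp only [hBdef, bb]; omega
  have hP : 2 ^ (B - 1) ≤ a := by
    have : B - 1 = Nat.log 2 a := by simp [hBdef, bb]
    rw [this]; exact Nat.pow_log_le_self 2 ha0
  have hPa : a < 2 ^ B := by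
    have := Nat.lt_pow_succ_log_self (show 1 < 2 by norm_num) a
    simpa [hBdef, bb] using this
  have h2P : 2 ^ B = 2 * 2 ^ (B - 1) := by
    conv_lhs => rw [show B = (B - 1) + 1 by omega]
    rw [pow_succ]; ring
  -- testBit facts
  have hbit0 : ∀ x : ℕ, x < 2 ^ (B - 1) → x.testBit (B - 1) = false := by
    intro x hx
    rw [Nat.testBit_eq_decide_div_mod_eq]
    rw [Nat.div_eq_of_lt hx]
    norm_num
  have hbit1 : ∀ x : ℕ, 2 ^ (B - 1) ≤ x → x < 2 ^ B → x.testBit (B - 1) = true := by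
    intro x hx1 hx2
    rw [Nat.testBit_eq_decide_div_mod_eq]
    have : x / 2 ^ (B - 1) = 1 :=
      Nat.div_eq_of_lt_le (by omega) (by omega)
    rw [this]
    norm_num
  -- no power of two strictly between a/2 and 2^(B-1)
  have hnp : ∀ t : ℕ, a / 2 < t → t < 2 ^ (B - 1) → ¬ ∃ k, t = 2 ^ k := by
    rintro t ht1 ht2 ⟨k, rfl⟩
    have hk : k < B - 1 := by
      by_contra h
      push_neg at h
      have := Nat.pow_le_pow_right (show 1 ≤ 2 by norm_num) h
      omega
    have hk2 : 2 ^ k ≤ 2 ^ (B - 2) := Nat.pow_le_pow_right (by norm_num) (by omega)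
    have h22 : 2 ^ (B - 1) = 2 * 2 ^ (B - 2) := by
      conv_lhs => rw [show B - 1 = (B - 2) + 1 by omega]
      rw [pow_succ]; ring
    omega
  -- no power of two strictly between 2^(B-1) and a
  have hnp2 : ∀ x : ℕ, 2 ^ (B - 1) < x → x ≤ a → ¬ ∃ k, x = 2 ^ k := by
    rintro x hx1 hx2 ⟨k, rfl⟩
    have hk : B ≤ k := by
      by_contra h
      push_neg at h
      have := Nat.pow_le_pow_right (show 1 ≤ 2 by norm_num) (show k ≤ B - 1 by omega)
      omega
    have := Nat.pow_le_pow_right (show 1 ≤ 2 by norm_num) hk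
    omega
  -- odd numbers ≥ 3 are not powers of 2
  have hnodd : ∀ t : ℕ, ¬ ∃ k, 2 * t + 1 + 2 = 2 ^ k := by
    rintro t ⟨k, hk⟩
    rcases k with _ | k
    · simp at hk
    · rw [pow_succ] at hk
      omega
  constructor
  · ext y
    simp only [Set.mem_diff, Set.mem_image, Set.mem_Icc, Ma, Set.mem_setOf_eq]
    constructor
    · rintro ⟨⟨x, ⟨hx0, hxa, hxp⟩, hgx⟩, hyM⟩
      by_cases hc : x < 2 ^ (B - 1)
      · have hg : gg a x = 2 * x := by
          simp only [gg, ← hBdef, hbit0 x hc, Bool.false_eq_true, if_false]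
        rw [hg] at hgx
        refine ⟨x, ⟨?_, by omega⟩, hgx⟩
        -- need a < 2x, from y = 2x ∉ Ma
        have hax : ¬ (2 * x ≤ a) := by
          intro hle
          apply hyM
          rw [← hgx]
          refine ⟨by omega, hle, ?_⟩
          rintro ⟨k, hk⟩
          rcases k with _ | k
          · omega
          · exact hxp ⟨k, by rw [pow_succ] at hk; omega⟩
        omega
      · exfalso
        push_neg at hc
        have hg : gg a x = 2 * (x - 2 ^ (B - 1)) + 1 := by
          simp only [gg, ← hBdef, hbit1 x hc (by omega), if_true]
          omega
        rw [hg] at hgx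
        apply hyM
        rw [← hgx]
        have hxgt : 2 ^ (B - 1) < x := by
          rcases Nat.lt_or_ge (2 ^ (B - 1)) x with h | h
          · exact h
          · exact absurd ⟨B - 1, by omega⟩ hxp
        refine ⟨by omega, by omega, ?_⟩
        have := hnodd (x - 2 ^ (B - 1) - 1)
        rintro ⟨k, hk⟩
        exact this ⟨k, by omega⟩
    · rintro ⟨t, ⟨ht1, ht2⟩, rfl⟩
      have hta : a / 2 < t := by omega
      have htP : t < 2 ^ (B - 1) := by omega
      refine ⟨⟨t, ⟨by omega, by omega, hnp t hta htP⟩, ?_⟩, ?_⟩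
      · simp only [gg, ← hBdef, hbit0 t htP, Bool.false_eq_true, if_false]
      · rintro ⟨-, hle, -⟩
        omega
  · ext y
    simp only [Set.mem_diff, Set.mem_image, Set.mem_Icc, Ma, Set.mem_setOf_eq]
    have hq : qq a = a - 2 ^ (B - 1) := rfl
    constructor
    · rintro ⟨⟨hy0, hya, hyp⟩, hyI⟩
      rcases Nat.even_or_odd y with ⟨s, rfl⟩ | ⟨t, rfl⟩
      · exfalso
        apply hyI
        have hs0 : 0 < s := by omega
        have hsP : s < 2 ^ (B - 1) := by omega
        refine ⟨s, ⟨hs0, by omega, ?_⟩, ?_⟩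
        · rintro ⟨k, rfl⟩
          exact hyp ⟨k + 1, by rw [pow_succ]; ring⟩
        · simp only [gg, ← hBdef, hbit0 s hsP, Bool.false_eq_true, if_false]
          omega
      · have ht1 : 1 ≤ t := by
          rcases Nat.eq_zero_or_pos t with rfl | h
          · exact absurd ⟨0, by omega⟩ hyp
          · exact h
        have htq : qq a + 1 ≤ t := by
          by_contra h
          push_neg at h
          apply hyI
          refine ⟨t + 2 ^ (B - 1), ⟨by omega, by omega, hnp2 _ (by omega) (by omega)⟩, ?_⟩
          simp only [gg, ← hBdef, hbit1 (t + 2 ^ (B - 1)) (by omega) (by omega), if_true]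
          omega
        exact ⟨t, ⟨htq, by omega⟩, rfl⟩
    · rintro ⟨t, ⟨ht1, ht2⟩, rfl⟩
      have hqa : qq a + 1 ≤ t := ht1
      have hya : 2 * t + 1 ≤ a := by omega
      refine ⟨⟨by omega, hya, ?_⟩, ?_⟩
      · rintro ⟨k, hk⟩
        rcases k with _ | k
        · omega
        · rw [pow_succ] at hk; omega
      · rintro ⟨x, ⟨hx0, hxa, hxp⟩, hgx⟩
        by_cases hc : x < 2 ^ (B - 1)
        · simp only [gg, ← hBdef, hbit0 x hc, Bool.false_eq_true, if_false] at hgx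
          omega
        · push_neg at hc
          simp only [gg, ← hBdef, hbit1 x hc (by omega), if_true] at hgx
          omega
end

section
/- With a ≥ 2, b = ⌊log_2 a⌋ + 1, M_a = {x : 0 < x ≤ a, x not a power of 2}, g as above, H_a = g(M_a) \ M_a, J_a = M_a \ g(M_a), and m = 2^b - a - 1: if J_a ≠ ∅ then |J_a| = |H_a| = ⌈(m-1)/2⌉. -/
open scoped Classical

private lemma testBit_top (x n : ℕ) (hx : x < 2^(n+1)) : x.testBit n ↔ 2^n ≤ x := by
  rw [Nat.testBit_eq_decide_div_mod_eq]
  simp only [decide_eq_true_eq]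
  have hp : 0 < 2^n := Nat.pow_pos (n := n) (by norm_num)
  have h1 : x / 2^n < 2 := Nat.div_lt_of_lt_mul (by rw [pow_succ] at hx; omega)
  have h0 : x / 2^n = 0 ↔ x < 2^n := by rw [Nat.div_eq_zero_iff]; omega
  generalize x / 2^n = d at *
  omega


theorem card_Ja_Ha' (a : ℕ) (ha : 2 ≤ a) :
    ({x | 0 < x ∧ x ≤ a ∧ ¬ ∃ k, x = 2 ^ k} \
      ((fun x => if x.testBit (Nat.log 2 a + 1 - 1) then 2 * x + 1 - 2 ^ (Nat.log 2 a + 1) else 2 * x) ''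
        {x | 0 < x ∧ x ≤ a ∧ ¬ ∃ k, x = 2 ^ k})).ncard
      = ((2 ^ (Nat.log 2 a + 1) - a - 1 - 1) + 1) / 2 ∧
    (((fun x => if x.testBit (Nat.log 2 a + 1 - 1) then 2 * x + 1 - 2 ^ (Nat.log 2 a + 1) else 2 * x) ''
        {x | 0 < x ∧ x ≤ a ∧ ¬ ∃ k, x = 2 ^ k}) \
      {x | 0 < x ∧ x ≤ a ∧ ¬ ∃ k, x = 2 ^ k}).ncard
      = ((2 ^ (Nat.log 2 a + 1) - a - 1 - 1) + 1) / 2 := by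
  set b : ℕ := Nat.log 2 a + 1 with hbdef
  set M : Set ℕ := {x | 0 < x ∧ x ≤ a ∧ ¬ ∃ k, x = 2 ^ k} with hM
  set g : ℕ → ℕ := fun x => if x.testBit (b - 1) then 2 * x + 1 - 2 ^ b else 2 * x with hg
  have hb2 : 2 ≤ b := by
    have := Nat.log_pos (by norm_num : 1 < 2) ha
    omega
  have hlow : 2 ^ (b - 1) ≤ a := by
    have h := Nat.pow_log_le_self 2 (by omega : a ≠ 0)
    simpa [hbdef] using h
  have hhigh : a < 2 ^ b := by
    have h := Nat.lt_pow_succ_log_self (by norm_num : 1 < 2) a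
    simpa [hbdef] using h
  have hpow1 : 2 ^ b = 2 * 2 ^ (b - 1) := by
    conv_lhs => rw [show b = (b - 1) + 1 by omega]
    rw [pow_succ]; ring
  have hpow2 : 2 ^ (b - 1) = 2 * 2 ^ (b - 2) := by
    conv_lhs => rw [show b - 1 = (b - 2) + 1 by omega]
    rw [pow_succ]; ring
  -- testBit characterization on [0, a]
  have htb : ∀ x : ℕ, x ≤ a → (x.testBit (b - 1) ↔ 2 ^ (b - 1) ≤ x) := by
    intro x hx
    apply testBit_top
    rw [show b - 1 + 1 = b by omega]; omega
  -- injectivity of g on M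
  have hinj : Set.InjOn g M := by
    intro x hx y hy hxy
    obtain ⟨hx1, hx2, -⟩ := hx
    obtain ⟨hy1, hy2, -⟩ := hy
    have h1 := htb x hx2
    have h2 := htb y hy2
    simp only [hg] at hxy
    by_cases c1 : x.testBit (b - 1) <;> by_cases c2 : y.testBit (b - 1)
    · rw [if_pos c1, if_pos c2] at hxy
      rw [h1] at c1; rw [h2] at c2; omega
    · rw [if_pos c1, if_neg c2] at hxy
      rw [h1] at c1; rw [h2] at c2; push_neg at c2; omega
    · rw [if_neg c1, if_pos c2] at hxy
      rw [h1] at c1; rw [h2] at c2; push_neg at c1; omega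
    · rw [if_neg c1, if_neg c2] at hxy; omega
  -- M is finite
  have hMfin : M.Finite := (Set.finite_Iic a).subset (fun x hx => hx.2.1)
  have hGfin : (g '' M).Finite := hMfin.image g
  -- the key set identity for H = g '' M \ M
  have hkey : (g '' M) \ M = (fun x => 2 * x) '' (Set.Ioo (a / 2) (2 ^ (b - 1))) := by
    ext y
    constructor
    · rintro ⟨⟨x, hx, rfl⟩, hy⟩
      obtain ⟨hx1, hx2, hx3⟩ := hx
      simp only [hg] at hy ⊢
      by_cases htop : x.testBit (b - 1)
      · -- impossible: g x stays in M
        exfalso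
        have hT : 2 ^ (b - 1) ≤ x := (htb x hx2).mp htop
        rw [if_pos htop] at hy
        apply hy
        refine ⟨by omega, by omega, ?_⟩
        rintro ⟨k, hk⟩
        rcases k with _ | k
        · exact hx3 ⟨b - 1, by omega⟩
        · have : 2 ^ (k + 1) = 2 * 2 ^ k := by rw [pow_succ]; ring
          omega
      · have hT : x < 2 ^ (b - 1) := by
          have := (htb x hx2).not.mp htop; omega
        rw [if_neg htop] at hy ⊢
        have h2x : a < 2 * x := by
          by_contra hle
          push_neg at hle
          apply hy
          refine ⟨by omega, hle, ?_⟩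
          rintro ⟨k, hk⟩
          rcases k with _ | k
          · omega
          · have : 2 ^ (k + 1) = 2 * 2 ^ k := by rw [pow_succ]; ring
            exact hx3 ⟨k, by omega⟩
        exact ⟨x, ⟨by omega, hT⟩, rfl⟩
    · rintro ⟨x, ⟨hx1, hx2⟩, rfl⟩
      have hxM : x ∈ M := by
        refine ⟨by omega, by omega, ?_⟩
        rintro ⟨k, rfl⟩
        have hk1 : (2:ℕ) ^ k < 2 ^ (b - 1) := hx2
        have hk2 : (2:ℕ) ^ (b - 2) < 2 ^ k := by omega
        have := (Nat.pow_lt_pow_iff_right (by norm_num : 1 < 2)).mp hk1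
        have := (Nat.pow_lt_pow_iff_right (by norm_num : 1 < 2)).mp hk2
        omega
      have hgx : g x = 2 * x := by
        simp only [hg]
        have hnb : ¬ x.testBit (b - 1) := by
          simp only [htb x (show x ≤ a by omega)]; omega
        rw [if_neg hnb]
      constructor
      · exact ⟨x, hxM, hgx⟩
      · rintro ⟨-, hle, -⟩
        have hle' : 2 * x ≤ a := hle
        omega
  -- count H
  have hinj2 : Function.Injective (fun x : ℕ => 2 * x) := by intro x y h; dsimp only at h; omega
  have hHcard : ((g '' M) \ M).ncard = 2 ^ (b - 1) - a / 2 - 1 := by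
    rw [hkey, Set.ncard_image_of_injective _ hinj2, ← Finset.coe_Ioo,
      Set.ncard_coe_finset, Nat.card_Ioo]
  have harith : 2 ^ (b - 1) - a / 2 - 1 = ((2 ^ b - a - 1 - 1) + 1) / 2 := by omega
  -- |J| = |H|
  have hJH : (M \ (g '' M)).ncard = ((g '' M) \ M).ncard := by
    have e1 : (M \ (g '' M)).ncard + (M ∩ (g '' M)).ncard = M.ncard := by
      rw [← Set.diff_self_inter]
      exact Set.ncard_diff_add_ncard_of_subset Set.inter_subset_left hMfin
    have e2 : ((g '' M) \ M).ncard + ((g '' M) ∩ M).ncard = (g '' M).ncard := by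
      rw [← Set.diff_self_inter]
      exact Set.ncard_diff_add_ncard_of_subset Set.inter_subset_left hGfin
    have e3 : (g '' M).ncard = M.ncard := Set.ncard_image_of_injOn hinj
    rw [Set.inter_comm] at e2
    omega
  exact ⟨by rw [hJH, hHcard, harith], by rw [hHcard, harith]⟩


/-- if `J_a = M_a \ g(M_a)` is nonempty, then
`|J_a| = |H_a| = ⌈(m-1)/2⌉` where `H_a = g(M_a) \ M_a`. -/
theorem card_Ja_Ha (a : ℕ) (ha : 2 ≤ a)
    (hJ : Ma a \ (gg a '' Ma a) ≠ ∅) :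
    (Ma a \ (gg a '' Ma a)).ncard = ((mm a - 1) + 1) / 2 ∧
    ((gg a '' Ma a) \ Ma a).ncard = ((mm a - 1) + 1) / 2 := by
  have h := card_Ja_Ha' a ha
  simp only [Ma, gg, mm, bb]
  exact h
end

section
/- Let a ≥ 2, b = ⌊log_2 a⌋ + 1, M_a = {x : 0 < x ≤ a, x not a power of 2}, g as defined, H_a = g(M_a) \ M_a, and define f': g(M_a) → M_a by f'(x) = x if x ∈ M_a ∩ g(M_a) and f'(x) = x + 1 - 2⌈m/2⌉ if x ∈ H_a, where m = 2^b - a - 1. Then f' is a well-defined bijection from g(M_a) onto M_a satisfying f'(x) ≤ x for all x ∈ g(M_a). -/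
open scoped Classical

lemma pow2_between {c k : ℕ} (h1 : 2 ^ c < 2 ^ k) (h2 : 2 ^ k < 2 ^ (c+1)) : False := by
  rcases le_or_gt k c with h | h
  · exact absurd (Nat.pow_le_pow_right (by norm_num : 0 < 2) h) (by omega)
  · exact absurd (Nat.pow_le_pow_right (by norm_num : 0 < 2) h) (by omega)

lemma testBit_high {x c : ℕ} (h : x < 2 * 2 ^ c) : x.testBit c = true ↔ 2 ^ c ≤ x := by
  rw [Nat.testBit_eq_decide_div_mod_eq, decide_eq_true_iff]
  have h2 : 0 < 2 ^ c := Nat.pow_pos (by norm_num)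
  have h3 : x / 2 ^ c < 2 := Nat.div_lt_iff_lt_mul h2 |>.mpr (by omega)
  have h4 : 2 ^ c ≤ x ↔ 1 ≤ x / 2 ^ c := by
    rw [Nat.le_div_iff_mul_le h2, one_mul]
  have h5 : x / 2 ^ c % 2 = x / 2 ^ c := Nat.mod_eq_of_lt h3
  omega

lemma odd_not_pow {y : ℕ} (h1 : y % 2 = 1) (h2 : 3 ≤ y) : ¬ ∃ k, y = 2 ^ k := by
  rintro ⟨k, rfl⟩
  rcases k with _ | k
  · simp at h2
  · have : 2 ^ (k+1) = 2 * 2 ^ k := by ring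
    omega

lemma ha_facts (a : ℕ) (ha : 2 ≤ a) :
    2 ^ (bb a - 1) ≤ a ∧ a < 2 * 2 ^ (bb a - 1) ∧ 2 ≤ 2 ^ (bb a - 1) ∧
      2 ^ bb a = 2 * 2 ^ (bb a - 1) := by
  have h0 : 1 ≤ Nat.log 2 a :=
    (Nat.le_log_iff_pow_le (by norm_num) (by omega)).mpr (by simpa using ha)
  have hb : bb a - 1 = Nat.log 2 a := by simp [bb]
  have hpow : 2 ^ bb a = 2 * 2 ^ (bb a - 1) := by
    rw [hb, bb, pow_succ]; ring
  have h2 : a < 2 ^ bb a := Nat.lt_pow_succ_log_self (by norm_num) a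
  refine ⟨?_, by omega, ?_, hpow⟩
  · rw [hb]; exact Nat.pow_log_le_self 2 (by omega)
  · calc (2:ℕ) = 2 ^ 1 := rfl
      _ ≤ 2 ^ (bb a - 1) := Nat.pow_le_pow_right (by norm_num) (by omega)

lemma gim (a : ℕ) (ha : 2 ≤ a) :
    gg a '' Ma a = {y | (y % 2 = 0 ∧ 0 < y ∧ y + 2 ≤ 2 * 2 ^ (bb a - 1) ∧ ¬ ∃ k, y = 2 ^ k) ∨
      (y % 2 = 1 ∧ 3 ≤ y ∧ y ≤ 2 * (a - 2 ^ (bb a - 1)) + 1)} := by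
  obtain ⟨hp1, hp2, hp3, hpow⟩ := ha_facts a ha
  ext y
  simp only [Set.mem_image, Set.mem_setOf_eq, Ma]
  constructor
  · rintro ⟨x, ⟨hx0, hxa, hxp⟩, rfl⟩
    have hxlt : x < 2 * 2 ^ (bb a - 1) := by omega
    by_cases hbit : x.testBit (bb a - 1)
    · have hpx : 2 ^ (bb a - 1) ≤ x := (testBit_high hxlt).mp hbit
      have hxne : x ≠ 2 ^ (bb a - 1) := by rintro rfl; exact hxp ⟨bb a - 1, rfl⟩
      right
      rw [gg, if_pos hbit]
      omega
    · have hxlt' : x < 2 ^ (bb a - 1) := by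
        by_contra hcon
        exact hbit ((testBit_high hxlt).mpr (by omega))
      left
      rw [gg, if_neg hbit]
      refine ⟨by omega, by omega, by omega, ?_⟩
      rintro ⟨k, hk⟩
      rcases k with _ | k
      · omega
      · have : 2 ^ (k+1) = 2 * 2 ^ k := by ring
        exact hxp ⟨k, by omega⟩
  · rintro (⟨h1, h2, h3, h4⟩ | ⟨h1, h2, h3⟩)
    · refine ⟨y / 2, ⟨by omega, by omega, ?_⟩, ?_⟩
      · rintro ⟨k, hk⟩
        exact h4 ⟨k + 1, by rw [pow_succ]; omega⟩
      · have hlt : y / 2 < 2 * 2 ^ (bb a - 1) := by omega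
        have hbit : ¬ (y / 2).testBit (bb a - 1) := by
          rw [testBit_high hlt]; omega
        rw [gg, if_neg hbit]
        omega
    · refine ⟨2 ^ (bb a - 1) + y / 2, ⟨by omega, by omega, ?_⟩, ?_⟩
      · rintro ⟨k, hk⟩
        have hk1 : 2 ^ (bb a - 1) < 2 ^ k := by omega
        have hk2 : 2 ^ k < 2 ^ (bb a - 1 + 1) := by rw [pow_succ]; omega
        exact pow2_between hk1 hk2
      · have hlt : 2 ^ (bb a - 1) + y / 2 < 2 * 2 ^ (bb a - 1) := by omega
        have hbit : (2 ^ (bb a - 1) + y / 2).testBit (bb a - 1) :=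
          (testBit_high hlt).mpr (by omega)
        rw [gg, if_pos hbit]
        omega


/-- `f'` is a well-defined bijection from `g(M_a)` onto `M_a`
with `f'(x) ≤ x` for all `x ∈ g(M_a)`. -/
theorem f'_bijOn (a : ℕ) (ha : 2 ≤ a) :
    Set.BijOn (ff' a) (gg a '' Ma a) (Ma a) ∧ ∀ x ∈ gg a '' Ma a, ff' a x ≤ x := by
  obtain ⟨hp1, hp2, hp3, hpow⟩ := ha_facts a ha
  have hmm : mm a = 2 * 2 ^ (bb a - 1) - a - 1 := by rw [mm, hpow]
  have hc : 2 * ((mm a + 1) / 2) = 2 * 2 ^ (bb a - 1) - a - a % 2 := by omega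
  have hMa : ∀ y, y ∈ Ma a ↔ (0 < y ∧ y ≤ a ∧ ¬ ∃ k, y = 2 ^ k) := fun y => Iff.rfl
  have key : ∀ y ∈ gg a '' Ma a,
      (y ∈ Ma a ∧ ff' a y = y ∧ (y % 2 = 0 ∨ y ≤ 2 * (a - 2 ^ (bb a - 1)) + 1)) ∨
      (¬ y ∈ Ma a ∧ ff' a y = y + 1 - 2 * ((mm a + 1) / 2) ∧ y % 2 = 0 ∧ a < y ∧
        y + 2 ≤ 2 * 2 ^ (bb a - 1)) := by
    intro y hy
    rw [gim a ha] at hy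
    by_cases hM : y ∈ Ma a
    · left
      refine ⟨hM, by rw [ff', if_pos hM], ?_⟩
      rcases hy with ⟨h1, _⟩ | ⟨_, _, h3⟩
      · exact Or.inl h1
      · exact Or.inr h3
    · right
      rcases hy with ⟨h1, h2, h3, h4⟩ | ⟨h1, h2, h3⟩
      · have hgt : a < y := by
          by_contra hle
          exact hM ((hMa y).mpr ⟨h2, by omega, h4⟩)
        exact ⟨hM, by rw [ff', if_neg hM], h1, hgt, by omega⟩
      · exact absurd ((hMa y).mpr ⟨by omega, by omega, odd_not_pow h1 h2⟩) hM
  have himg : ∀ y, (¬ y ∈ Ma a) → y % 2 = 0 → a < y → y + 2 ≤ 2 * 2 ^ (bb a - 1) →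
      (y + 1 - 2 * ((mm a + 1) / 2) ∈ Ma a ∧
       2 * (a - 2 ^ (bb a - 1)) + 3 ≤ y + 1 - 2 * ((mm a + 1) / 2) ∧
       (y + 1 - 2 * ((mm a + 1) / 2)) % 2 = 1) := by
    intro y hM h1 h2 h3
    have hodd : (y + 1 - 2 * ((mm a + 1) / 2)) % 2 = 1 := by omega
    have hlb : 2 * (a - 2 ^ (bb a - 1)) + 3 ≤ y + 1 - 2 * ((mm a + 1) / 2) := by omega
    have hub : y + 1 - 2 * ((mm a + 1) / 2) ≤ a := by omega
    exact ⟨(hMa _).mpr ⟨by omega, hub, odd_not_pow hodd (by omega)⟩, hlb, hodd⟩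
  constructor
  · refine ⟨?_, ?_, ?_⟩
    · intro y hy
      rcases key y hy with ⟨hM, hf, _⟩ | ⟨hM, hf, h1, h2, h3⟩
      · rwa [hf]
      · rw [hf]; exact (himg y hM h1 h2 h3).1
    · intro y1 h1 y2 h2 heq
      rcases key y1 h1 with ⟨hM1, hf1, hx1⟩ | ⟨hM1, hf1, e1, g1, l1⟩ <;>
        rcases key y2 h2 with ⟨hM2, hf2, hx2⟩ | ⟨hM2, hf2, e2, g2, l2⟩
      · rw [hf1, hf2] at heq; exact heq
      · obtain ⟨_, lb2, od2⟩ := himg y2 hM2 e2 g2 l2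
        rw [hf1, hf2] at heq
        have hle1 : y1 ≤ a := ((hMa y1).mp hM1).2.1
        omega
      · obtain ⟨_, lb1, od1⟩ := himg y1 hM1 e1 g1 l1
        rw [hf1, hf2] at heq
        have hle2 : y2 ≤ a := ((hMa y2).mp hM2).2.1
        omega
      · rw [hf1, hf2] at heq; omega
    · intro z hz
      obtain ⟨hz0, hza, hzp⟩ := (hMa z).mp hz
      rcases Nat.mod_two_eq_zero_or_one z with he2 | ho2
      · refine ⟨z, ?_, by rw [ff', if_pos hz]⟩
        rw [gim a ha]
        exact Or.inl ⟨he2, hz0, by omega, hzp⟩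
      · have hz3 : 3 ≤ z := by
          by_contra h
          push_neg at h
          interval_cases z
          · exact hzp ⟨0, rfl⟩
          · omega
        rcases le_or_gt z (2 * (a - 2 ^ (bb a - 1)) + 1) with hle | hgt
        · refine ⟨z, ?_, by rw [ff', if_pos hz]⟩
          rw [gim a ha]
          exact Or.inr ⟨ho2, hz3, hle⟩
        · have hy1 : (z - 1 + 2 * ((mm a + 1) / 2)) % 2 = 0 := by omega
          have hy2 : a < z - 1 + 2 * ((mm a + 1) / 2) := by omega
          have hy3 : z - 1 + 2 * ((mm a + 1) / 2) + 2 ≤ 2 * 2 ^ (bb a - 1) := by omega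
          have hynp : ¬ ∃ k, z - 1 + 2 * ((mm a + 1) / 2) = 2 ^ k := by
            rintro ⟨k, hk⟩
            exact pow2_between (c := bb a - 1) (k := k) (by omega)
              (by rw [pow_succ]; omega)
          have hyM : ¬ (z - 1 + 2 * ((mm a + 1) / 2)) ∈ Ma a := fun h => by
            have := ((hMa _).mp h).2.1; omega
          refine ⟨z - 1 + 2 * ((mm a + 1) / 2), ?_, ?_⟩
          · rw [gim a ha]
            exact Or.inl ⟨hy1, by omega, hy3, hynp⟩
          · rw [ff', if_neg hyM]
            omega
  · intro y hy
    rcases key y hy with ⟨_, hf, _⟩ | ⟨_, hf, e1, g1, l1⟩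
    · omega
    · omega
end

section
/- Let f = f' ∘ g : M_a → M_a as constructed (with f' the correction map and g the doubling map). Then f is a bijection of M_a onto itself, f(x) ≤ g(x) for all x ∈ M_a, and f(x) = g(x) whenever the (b-1)-th binary digit of x is 1. -/
open scoped Classical

lemma testBit_high_iff {x n : ℕ} (hx : x < 2 ^ (n + 1)) :
    x.testBit n = true ↔ 2 ^ n ≤ x := by
  rw [Nat.testBit_eq_decide_div_mod_eq, decide_eq_true_eq]
  have hp : 0 < 2 ^ n := Nat.pow_pos (by norm_num)
  constructor
  · intro h
    by_contra hc
    push_neg at hc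
    rw [Nat.div_eq_of_lt hc] at h; simp at h
  · intro h
    have h2 : 2 ^ (n+1) = 2 * 2 ^ n := by ring
    have : x / 2 ^ n = 1 := by
      have h1 : 1 ≤ x / 2 ^ n := (Nat.one_le_div_iff hp).2 h
      have h2' : x / 2 ^ n < 2 := Nat.div_lt_of_lt_mul (by omega)
      omega
    rw [this]

lemma not_pow_odd {x : ℕ} (h3 : 3 ≤ x) (ho : x % 2 = 1) : ¬ ∃ k, x = 2 ^ k := by
  rintro ⟨k, rfl⟩
  cases k with
  | zero => simp at h3
  | succ k => rw [pow_succ] at ho; omega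

lemma not_pow_double {x : ℕ} (h : ¬ ∃ k, x = 2 ^ k) : ¬ ∃ k, 2 * x = 2 ^ k := by
  rintro ⟨k, hk⟩
  cases k with
  | zero => omega
  | succ k => exact h ⟨k, by rw [pow_succ] at hk; omega⟩

lemma not_pow_between {x n : ℕ} (h1 : 2 ^ n < x) (h2 : x < 2 ^ (n + 1)) :
    ¬ ∃ k, x = 2 ^ k := by
  rintro ⟨k, rfl⟩
  have hk1 : n < k := (Nat.pow_lt_pow_iff_right (by norm_num)).1 h1
  have hk2 : k < n + 1 := (Nat.pow_lt_pow_iff_right (by norm_num)).1 h2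
  omega

lemma basic (a : ℕ) (ha : 2 ≤ a) :
    2 ≤ bb a ∧ 2 ^ (bb a - 1) ≤ a ∧ a < 2 ^ bb a ∧ 2 ^ bb a = 2 * 2 ^ (bb a - 1) := by
  have h1 : 0 < Nat.log 2 a := Nat.log_pos (by norm_num) ha
  have h2 : bb a - 1 = Nat.log 2 a := by simp [bb]
  refine ⟨by simp [bb]; omega, ?_, ?_, ?_⟩
  · rw [h2]; exact Nat.pow_log_le_self 2 (by omega)
  · exact Nat.lt_pow_succ_log_self (by norm_num) a
  · rw [h2, bb, pow_succ]; ring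

lemma three_le_of_mem {a x : ℕ} (hx : x ∈ Ma a) : 3 ≤ x := by
  obtain ⟨h0, _, hp⟩ := hx
  have h1 : x ≠ 1 := fun h => hp ⟨0, by simp [h]⟩
  have h2 : x ≠ 2 := fun h => hp ⟨1, by simp [h]⟩
  omega

/-- Classification of `ff` on `Ma`. -/
lemma ff_classify (a : ℕ) (ha : 2 ≤ a) {x : ℕ} (hx : x ∈ Ma a) :
    (x < 2 ^ (bb a - 1) ∧ 2 * x ≤ a ∧ gg a x = 2 * x ∧ ff a x = 2 * x ∧ ff a x ∈ Ma a) ∨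
    (x < 2 ^ (bb a - 1) ∧ a < 2 * x ∧ gg a x = 2 * x ∧
      ff a x = 2 * x + 1 - 2 * ((mm a + 1) / 2) ∧ ff a x ∈ Ma a ∧ ff a x % 2 = 1 ∧
      a - mm a < ff a x) ∨
    (2 ^ (bb a - 1) < x ∧ gg a x = 2 * x + 1 - 2 ^ bb a ∧ ff a x = gg a x ∧
      ff a x = 2 * x + 1 - 2 ^ bb a ∧
      ff a x ∈ Ma a ∧ ff a x % 2 = 1 ∧ ff a x ≤ a - mm a) := by
  obtain ⟨hb2, hHa, haB, hBH⟩ := basic a ha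
  have hm : mm a + a + 1 = 2 ^ bb a := by
    have : mm a = 2 ^ bb a - a - 1 := rfl
    omega
  have hx3 : 3 ≤ x := three_le_of_mem hx
  obtain ⟨hx0, hxa, hxp⟩ := hx
  have hbeq : bb a - 1 + 1 = bb a := by omega
  have hxB : x < 2 ^ (bb a - 1 + 1) := by rw [hbeq]; omega
  by_cases hxh : 2 ^ (bb a - 1) ≤ x
  · -- high bit set
    right; right
    have hxH : 2 ^ (bb a - 1) < x :=
      lt_of_le_of_ne hxh (fun h => hxp ⟨bb a - 1, h.symm⟩)
    have htb : x.testBit (bb a - 1) = true := (testBit_high_iff hxB).2 hxh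
    have hgg : gg a x = 2 * x + 1 - 2 ^ bb a := by rw [gg, if_pos htb]
    have hvmem : gg a x ∈ Ma a := by
      rw [hgg]
      refine ⟨by omega, by omega, not_pow_odd (by omega) (by omega)⟩
    have hffv : ff a x = gg a x := by rw [ff, ff', if_pos hvmem]
    refine ⟨hxH, hgg, hffv, by rw [hffv, hgg], hffv ▸ hvmem, ?_, ?_⟩ <;>
      rw [hffv, hgg] <;> omega
  · -- high bit clear
    push_neg at hxh
    have htb : x.testBit (bb a - 1) = false := by
      rw [← Bool.not_eq_true]
      exact fun h => absurd ((testBit_high_iff hxB).1 h) (by omega)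
    have hgg : gg a x = 2 * x := by rw [gg, htb]; simp
    by_cases h2x : 2 * x ≤ a
    · left
      have hvmem : gg a x ∈ Ma a := by
        rw [hgg]
        exact ⟨by omega, h2x, not_pow_double hxp⟩
      have hffv : ff a x = 2 * x := by rw [ff, ff', if_pos hvmem, hgg]
      exact ⟨hxh, h2x, hgg, hffv, hffv ▸ (hgg ▸ hvmem)⟩
    · right; left
      push_neg at h2x
      have hnm : gg a x ∉ Ma a := by
        rw [hgg]; exact fun h => absurd h.2.1 (by omega)
      have hffv : ff a x = 2 * x + 1 - 2 * ((mm a + 1) / 2) := by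
        rw [ff, ff', if_neg hnm, hgg]
      have hmem : ff a x ∈ Ma a := by
        rw [hffv]
        refine ⟨by omega, by omega, not_pow_odd (by omega) (by omega)⟩
      exact ⟨hxh, h2x, hgg, hffv, hmem, by rw [hffv]; omega, by rw [hffv]; omega⟩

/-- `f = f' ∘ g` is a bijection of `M_a` onto itself, with
`f(x) ≤ g(x)` for all `x ∈ M_a`, and `f(x) = g(x)` whenever bit `b-1` of `x` is `1`. -/
theorem f_bijOn (a : ℕ) (ha : 2 ≤ a) :
    Set.BijOn (ff a) (Ma a) (Ma a) ∧
    (∀ x ∈ Ma a, ff a x ≤ gg a x) ∧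
    (∀ x ∈ Ma a, x.testBit (bb a - 1) = true → ff a x = gg a x) := by
  obtain ⟨hb2, hHa, haB, hBH⟩ := basic a ha
  have hm : mm a + a + 1 = 2 ^ bb a := by
    have : mm a = 2 ^ bb a - a - 1 := rfl
    omega
  have hbeq : bb a - 1 + 1 = bb a := by omega
  have hbeq2 : bb a - 2 + 1 = bb a - 1 := by omega
  have hH2 : 2 ^ (bb a - 1) = 2 * 2 ^ (bb a - 2) := by
    rw [← hbeq2, pow_succ]; ring
  refine ⟨⟨?_, ?_, ?_⟩, ?_, ?_⟩
  · -- MapsTo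
    intro x hx
    rcases ff_classify a ha hx with ⟨_, _, _, _, h⟩ | ⟨_, _, _, _, h, _⟩ | ⟨_, _, _, _, h, _⟩
    all_goals exact h
  · -- InjOn
    intro x hxm y hym hfe
    rcases ff_classify a ha hxm with ⟨hx1, hx2, _, hx4, _⟩ | ⟨hx1, hx2, _, hx4, _, hx6, hx7⟩ |
        ⟨hx1, hx2, _, hx4, _, hx6, hx7⟩ <;>
      rcases ff_classify a ha hym with ⟨hy1, hy2, _, hy4, _⟩ | ⟨hy1, hy2, _, hy4, _, hy6, hy7⟩ |
        ⟨hy1, hy2, _, hy4, _, hy6, hy7⟩ <;>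
      omega
  · -- SurjOn
    intro y hy
    have hy3 : 3 ≤ y := three_le_of_mem hy
    obtain ⟨hy0, hya, hyp⟩ := hy
    by_cases hyo : y % 2 = 0
    · -- y even : preimage y / 2
      refine ⟨y / 2, ⟨by omega, by omega, ?_⟩, ?_⟩
      · rintro ⟨k, hk⟩
        exact hyp ⟨k + 1, by rw [pow_succ]; omega⟩
      · have htb : (y / 2).testBit (bb a - 1) = false := by
          rw [← Bool.not_eq_true]
          refine fun h => absurd ((testBit_high_iff ?_).1 h) (by omega)
          rw [hbeq]; omega
        have hgg : gg a (y / 2) = y := by rw [gg, htb]; simp; omega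
        rw [ff, hgg, ff']
        exact if_pos ⟨hy0, hya, hyp⟩
    · by_cases hym : y ≤ a - mm a
      · -- y odd small : preimage (y-1)/2 + 2^(b-1)
        set x := (y - 1) / 2 + 2 ^ (bb a - 1) with hxd
        have h2x : 2 * x = y - 1 + 2 ^ bb a := by omega
        refine ⟨x, ⟨by omega, by omega, ?_⟩, ?_⟩
        · exact not_pow_between (n := bb a - 1) (by omega) (by rw [hbeq]; omega)
        · have htb : x.testBit (bb a - 1) = true := by
            refine (testBit_high_iff ?_).2 (by omega)
            rw [hbeq]; omega
          have hgg : gg a x = y := by rw [gg, if_pos htb]; omega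
          rw [ff, hgg, ff']
          exact if_pos ⟨hy0, hya, hyp⟩
      · -- y odd large : preimage (y - 1 + c)/2
        set c := 2 * ((mm a + 1) / 2) with hcd
        set x := (y - 1 + c) / 2 with hxd
        have h2x : 2 * x = y - 1 + c := by omega
        have hax : a < 2 * x := by omega
        have hxH : 2 * x ≤ 2 ^ bb a - 2 := by omega
        refine ⟨x, ⟨by omega, by omega, ?_⟩, ?_⟩
        · exact not_pow_between (n := bb a - 2) (by omega) (by rw [hbeq2]; omega)
        · have htb : x.testBit (bb a - 1) = false := by
            rw [← Bool.not_eq_true]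
            refine fun h => absurd ((testBit_high_iff ?_).1 h) (by omega)
            rw [hbeq]; omega
          have hgg : gg a x = 2 * x := by rw [gg, htb]; simp
          have hnm : gg a x ∉ Ma a := by
            rw [hgg]; exact fun h => absurd h.2.1 (by omega)
          rw [ff, ff', if_neg hnm, hgg]
          omega
  · -- f ≤ g
    intro x hx
    rcases ff_classify a ha hx with ⟨_, _, h3, h4, _⟩ | ⟨_, h2, h3, h4, _, _, _⟩ |
        ⟨_, _, h3, _, _⟩
    · rw [h3, h4]
    · rw [h3, h4]; omega
    · rw [h3]
  · -- f = g on high bit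
    intro x hx htb
    rcases ff_classify a ha hx with ⟨h1, _⟩ | ⟨h1, _⟩ | ⟨_, _, h3, _⟩
    · exact absurd ((testBit_high_iff (by rw [hbeq]; exact by omega)).1 htb) (by omega)
    · exact absurd ((testBit_high_iff (by rw [hbeq]; exact by omega)).1 htb) (by omega)
    · exact h3
end

section
/- Define h : M_a → Z_{2^a} by h(x) = 2^{f(x)-1} + Σ_{j=0}^{b-2} x_j 2^{2^{j+1}-1} + x_{b-1}, where x = Σ_{j=0}^{b-1} x_j 2^j and f is the bijection of M_a. Then h is injective, and the Hamming weight of h(x) (as a vector in F_2^a) equals 1 + (Hamming weight of x) for all x ∈ M_a. -/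
open scoped Classical

/-! ### Auxiliary lemmas -/

section Aux

open scoped Classical

lemma two_pow_testBit_true {x i : ℕ} (h1 : 2^i ≤ x) (h2 : x < 2^(i+1)) : x.testBit i = true := by
  rw [Nat.testBit_eq_decide_div_mod_eq, decide_eq_true_eq]
  have hd : x / 2^i = 1 := Nat.div_eq_of_lt_le (by simpa using h1) (by rw [pow_succ] at h2; omega)
  simp [hd]

lemma testBit_false_lt {x i : ℕ} (h1 : x < 2^(i+1)) (h2 : x.testBit i = false) : x < 2^i := by
  by_contra hc
  push_neg at hc
  rw [two_pow_testBit_true hc h1] at h2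
  simp at h2

lemma testBit_two_pow_add' {n i : ℕ} (h : n.testBit i = false) (j : ℕ) :
    (2^i + n).testBit j = (decide (j = i) || n.testBit j) := by
  set lo := n % 2^(i+1) with hlodef
  set hi := n / 2^(i+1) with hhidef
  have hn : n = 2^(i+1) * hi + lo := (Nat.div_add_mod n (2^(i+1))).symm
  have hlo1 : lo < 2^(i+1) := Nat.mod_lt _ (Nat.pow_pos (by norm_num))
  have hloi : lo.testBit i = false := by
    rw [hlodef, Nat.testBit_mod_two_pow]; simp [h]
  have hlo : lo < 2^i := testBit_false_lt hlo1 hloi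
  have h2 : 2^i + lo < 2^(i+1) := by rw [pow_succ]; omega
  have heq : 2^i + n = 2^(i+1) * hi + (2^i + lo) := by omega
  rw [heq, Nat.testBit_two_pow_mul_add _ h2 j]
  conv_rhs => rw [hn, Nat.testBit_two_pow_mul_add _ hlo1 j]
  rcases lt_trichotomy j i with hj | rfl | hj
  · rw [if_pos (by omega), if_pos (by omega), Nat.testBit_two_pow_add_gt hj]
    simp [Nat.ne_of_lt hj]
  · rw [if_pos (by omega), if_pos (by omega), Nat.testBit_two_pow_add_eq, hloi]
    simp
  · rw [if_neg (by omega), if_neg (by omega)]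
    simp [Nat.ne_of_gt hj]

lemma testBit_sum_two_pow (s : Finset ℕ) : ∀ j,
    (∑ i ∈ s, 2^i).testBit j = decide (j ∈ s) := by
  classical
  induction s using Finset.induction_on with
  | empty => simp
  | @insert i s hi ih =>
    intro j
    rw [Finset.sum_insert hi, testBit_two_pow_add' (by rw [ih]; simp [hi])]
    simp [ih, Finset.mem_insert]

lemma pow_bb_le {a : ℕ} (ha : 2 ≤ a) : 2 ^ (bb a - 1) ≤ a := by
  have := Nat.pow_log_le_self 2 (show a ≠ 0 by omega)
  simpa [bb] using this

lemma lt_pow_bb (a : ℕ) : a < 2 ^ bb a := Nat.lt_pow_succ_log_self (by norm_num) a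

lemma two_le_bb {a : ℕ} (ha : 2 ≤ a) : 2 ≤ bb a := by
  have := Nat.log_pos (show 1 < 2 by norm_num) (show 2 ≤ a from ha)
  simp only [bb]; omega

lemma pow_bb_eq (a : ℕ) : 2 ^ bb a = 2 * 2 ^ (bb a - 1) := by
  conv_lhs => rw [show bb a = (bb a - 1) + 1 by simp [bb], pow_succ, Nat.mul_comm]

lemma bb_le_a {a : ℕ} (ha : 2 ≤ a) : bb a ≤ a := by
  have h1 : bb a - 1 < 2 ^ (bb a - 1) := Nat.lt_two_pow_self
  have h2 := pow_bb_le ha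
  omega

lemma ff_mem {a x : ℕ} (ha : 2 ≤ a) (hx : x ∈ Ma a) : ff a x ∈ Ma a := by
  obtain ⟨hx0, hxa, hxp⟩ := hx
  have hB1 : 2 ^ (bb a - 1) ≤ a := pow_bb_le ha
  have hB2 : a < 2 ^ bb a := lt_pow_bb a
  have hBB : 2 ^ bb a = 2 * 2 ^ (bb a - 1) := pow_bb_eq a
  rw [ff, gg]
  by_cases htop : x.testBit (bb a - 1)
  · rw [if_pos htop]
    have hge : 2 ^ (bb a - 1) ≤ x := Nat.ge_two_pow_of_testBit htop
    have hgm : (2 * x + 1 - 2 ^ bb a) ∈ Ma a := by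
      refine ⟨by omega, by omega, ?_⟩
      rintro ⟨k, hk⟩
      cases k with
      | zero => exact hxp ⟨bb a - 1, by omega⟩
      | succ n => rw [pow_succ] at hk; omega
    rw [ff', if_pos hgm]
    exact hgm
  · rw [if_neg htop]
    have hlt : x < 2 ^ (bb a - 1) := by
      apply testBit_false_lt _ (by simpa using htop)
      calc x ≤ a := hxa
        _ < 2 ^ bb a := hB2
        _ = 2 ^ ((bb a - 1) + 1) := by rw [pow_succ]; omega
    by_cases hle : 2 * x ≤ a
    · have hgm : (2 * x) ∈ Ma a := by
        refine ⟨by omega, hle, ?_⟩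
        rintro ⟨k, hk⟩
        cases k with
        | zero => omega
        | succ n => exact hxp ⟨n, by rw [pow_succ] at hk; omega⟩
      rw [ff', if_pos hgm]
      exact hgm
    · have hgm : (2 * x) ∉ Ma a := fun h => hle h.2.1
      rw [ff', if_neg hgm]
      set m := mm a with hm
      set c := (m + 1) / 2 with hc
      have hmval : m + a + 1 = 2 ^ bb a := by
        simp only [hm, mm]; omega
      refine ⟨by omega, by omega, ?_⟩
      rintro ⟨k, hk⟩
      cases k with
      | zero => omega
      | succ n => rw [pow_succ] at hk; omega

/-- auxiliary index sets for the support of `hh a x`. -/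
noncomputable def TA (a x : ℕ) : Finset ℕ :=
  ((Finset.range (bb a - 1)).filter (fun j => x.testBit j)).image (fun j => 2^(j+1)-1)

noncomputable def TB (a x : ℕ) : Finset ℕ := if x.testBit (bb a - 1) then {0} else ∅

noncomputable def Tset (a x : ℕ) : Finset ℕ := insert (ff a x - 1) (TA a x ∪ TB a x)

lemma pow_pred_inj : Function.Injective (fun j : ℕ => 2^(j+1)-1) := by
  intro j k h
  simp only at h
  have h1 : (0:ℕ) < 2^(j+1) := Nat.pow_pos (by norm_num)
  have h2 : (0:ℕ) < 2^(k+1) := Nat.pow_pos (by norm_num)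
  have h3 : 2^(j+1) = 2^(k+1) := by omega
  have := Nat.pow_right_injective (le_refl 2) h3
  omega

lemma TA_TB_disj (a x : ℕ) : Disjoint (TA a x) (TB a x) := by
  rw [Finset.disjoint_left]
  intro y hy hz
  simp only [TA, Finset.mem_image, Finset.mem_filter, Finset.mem_range] at hy
  obtain ⟨j, _, rfl⟩ := hy
  have h1 : 2 ≤ 2^(j+1) := by
    calc (2:ℕ) = 2^1 := by norm_num
      _ ≤ 2^(j+1) := Nat.pow_le_pow_right (by norm_num) (by omega)
  have hz0 : 2^(j+1)-1 = 0 := by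
    by_cases hb : x.testBit (bb a - 1) <;> simp [TB, hb] at hz
    exact hz
  omega

lemma p_notmem {a x : ℕ} (ha : 2 ≤ a) (hx : x ∈ Ma a) :
    ff a x - 1 ∉ TA a x ∪ TB a x := by
  have hf := ff_mem ha hx
  obtain ⟨hf0, hfa, hfp⟩ := hf
  intro h
  rcases Finset.mem_union.mp h with h | h
  · simp only [TA, Finset.mem_image, Finset.mem_filter, Finset.mem_range] at h
    obtain ⟨j, _, hj⟩ := h
    have h1 : (0:ℕ) < 2^(j+1) := Nat.pow_pos (by norm_num)
    exact hfp ⟨j+1, by omega⟩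
  · have h0 : ff a x - 1 = 0 := by
      by_cases hb : x.testBit (bb a - 1) <;> simp [TB, hb] at h
      exact h
    exact hfp ⟨0, by simpa using (by omega : ff a x = 1)⟩

lemma hh_eq_sum {a x : ℕ} (ha : 2 ≤ a) (hx : x ∈ Ma a) :
    hh a x = ∑ i ∈ Tset a x, 2^i := by
  rw [Tset, Finset.sum_insert (p_notmem ha hx), Finset.sum_union (TA_TB_disj a x), TA,
    Finset.sum_image (fun i _ j _ h => pow_pred_inj h), Finset.sum_filter]
  have hS : ∑ j ∈ Finset.range (bb a - 1), bitv x j * 2 ^ (2 ^ (j + 1) - 1)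
      = ∑ j ∈ Finset.range (bb a - 1), if x.testBit j then 2 ^ (2 ^ (j + 1) - 1) else 0 := by
    apply Finset.sum_congr rfl
    intro j _
    by_cases hb : x.testBit j <;> simp [bitv, hb]
  have hTB : bitv x (bb a - 1) = ∑ i ∈ TB a x, 2^i := by
    by_cases hb : x.testBit (bb a - 1) <;> simp [TB, bitv, hb]
  rw [hh, hS, hTB, add_assoc]

lemma Tset_subset {a x : ℕ} (ha : 2 ≤ a) (hx : x ∈ Ma a) :
    Tset a x ⊆ Finset.range a := by
  intro i hi
  rw [Finset.mem_range]
  rcases Finset.mem_insert.mp hi with rfl | hi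
  · have := (ff_mem ha hx).2.1
    have := (ff_mem ha hx).1
    omega
  rcases Finset.mem_union.mp hi with hi | hi
  · simp only [TA, Finset.mem_image, Finset.mem_filter, Finset.mem_range] at hi
    obtain ⟨j, ⟨hj, _⟩, rfl⟩ := hi
    have h1 : 2^(j+1) ≤ 2^(bb a - 1) := Nat.pow_le_pow_right (by norm_num) (by omega)
    have h2 := pow_bb_le ha
    have h3 : (0:ℕ) < 2^(j+1) := Nat.pow_pos (by norm_num)
    omega
  · have h0 : i = 0 := by
      by_cases hb : x.testBit (bb a - 1) <;> simp [TB, hb] at hi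
      exact hi
    omega

lemma mem_Tset_pow {a x : ℕ} (ha : 2 ≤ a) (hx : x ∈ Ma a) {k : ℕ} (hk : k < bb a - 1) :
    ((2^(k+1)-1) ∈ Tset a x) ↔ x.testBit k = true := by
  obtain ⟨hf0, hfa, hfp⟩ := ff_mem ha hx
  constructor
  · intro h
    rcases Finset.mem_insert.mp h with h | h
    · exfalso
      have h1 : (0:ℕ) < 2^(k+1) := Nat.pow_pos (by norm_num)
      exact hfp ⟨k+1, by omega⟩
    rcases Finset.mem_union.mp h with h | h
    · simp only [TA, Finset.mem_image, Finset.mem_filter, Finset.mem_range] at h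
      obtain ⟨j, ⟨hj1, hj2⟩, hj3⟩ := h
      have := pow_pred_inj hj3
      rwa [← this]
    · exfalso
      have h1 : 2 ≤ 2^(k+1) := by
        calc (2:ℕ) = 2^1 := by norm_num
          _ ≤ 2^(k+1) := Nat.pow_le_pow_right (by norm_num) (by omega)
      have h0 : 2^(k+1)-1 = 0 := by
        by_cases hb : x.testBit (bb a - 1) <;> simp [TB, hb] at h
        exact h
      omega
  · intro h
    apply Finset.mem_insert.mpr
    refine Or.inr (Finset.mem_union.mpr (Or.inl ?_))
    simp only [TA, Finset.mem_image, Finset.mem_filter, Finset.mem_range]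
    exact ⟨k, ⟨hk, h⟩, rfl⟩

lemma mem_Tset_zero {a x : ℕ} (ha : 2 ≤ a) (hx : x ∈ Ma a) :
    (0 ∈ Tset a x) ↔ x.testBit (bb a - 1) = true := by
  obtain ⟨hf0, hfa, hfp⟩ := ff_mem ha hx
  constructor
  · intro h
    rcases Finset.mem_insert.mp h with h | h
    · exact absurd ⟨0, by simpa using (by omega : ff a x = 1)⟩ hfp
    rcases Finset.mem_union.mp h with h | h
    · exfalso
      simp only [TA, Finset.mem_image, Finset.mem_filter, Finset.mem_range] at h
      obtain ⟨j, _, hj⟩ := h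
      have h1 : 2 ≤ 2^(j+1) := by
        calc (2:ℕ) = 2^1 := by norm_num
          _ ≤ 2^(j+1) := Nat.pow_le_pow_right (by norm_num) (by omega)
      omega
    · by_cases hb : x.testBit (bb a - 1)
      · exact hb
      · simp [TB, hb] at h
  · intro h
    refine Finset.mem_insert.mpr (Or.inr (Finset.mem_union.mpr (Or.inr ?_)))
    simp [TB, h]

lemma card_Tset {a x : ℕ} (ha : 2 ≤ a) (hx : x ∈ Ma a) :
    (Tset a x).card = 1 + ((Finset.range (bb a - 1)).filter (fun j => x.testBit j)).card
      + (if x.testBit (bb a - 1) then 1 else 0) := by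
  rw [Tset, Finset.card_insert_of_notMem (p_notmem ha hx),
    Finset.card_union_of_disjoint (TA_TB_disj a x), TA,
    Finset.card_image_of_injective _ pow_pred_inj]
  by_cases hb : x.testBit (bb a - 1) <;> simp [TB, hb] <;> omega

lemma wt_eq_of_mem {a x : ℕ} (ha : 2 ≤ a) (hx : x ∈ Ma a) :
    wt a x = ((Finset.range (bb a - 1)).filter (fun j => x.testBit j)).card
      + (if x.testBit (bb a - 1) then 1 else 0) := by
  have hxa : x ≤ a := hx.2.1
  have hb2 := lt_pow_bb a
  have hba := bb_le_a ha
  have hfe : (Finset.range a).filter (fun j => x.testBit j)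
      = (Finset.range (bb a)).filter (fun j => x.testBit j) := by
    ext j
    simp only [Finset.mem_filter, Finset.mem_range]
    constructor
    · rintro ⟨hj, htb⟩
      refine ⟨?_, htb⟩
      have h1 : 2^j ≤ x := Nat.ge_two_pow_of_testBit htb
      have h2 : 2^j < 2^(bb a) := by omega
      exact (Nat.pow_lt_pow_iff_right (by norm_num)).mp h2
    · rintro ⟨hj, htb⟩
      exact ⟨by omega, htb⟩
  rw [wt, hfe]
  conv_lhs => rw [show bb a = (bb a - 1) + 1 by simp [bb]]
  rw [Finset.range_add_one, Finset.filter_insert]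
  by_cases hb : x.testBit (bb a - 1)
  · rw [if_pos hb, Finset.card_insert_of_notMem (by simp), if_pos hb]
  · rw [if_neg hb, if_neg hb]; omega

end Aux

/-- `h` is injective on `M_a`, and the Hamming weight of `h(x)`
(in `F_2^a`) equals `1 + ‖x‖` for all `x ∈ M_a`. -/
theorem h_injective_weight (a : ℕ) (ha : 2 ≤ a) :
    Set.InjOn (hh a) (Ma a) ∧ ∀ x ∈ Ma a, wt a (hh a x) = 1 + wt a x := by
  classical
  have hbit : ∀ x ∈ Ma a, ∀ j, (hh a x).testBit j = decide (j ∈ Tset a x) := by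
    intro x hx j
    rw [hh_eq_sum ha hx, testBit_sum_two_pow]
  constructor
  · intro x hx y hy hxy
    apply Nat.eq_of_testBit_eq
    intro j
    have hb1 : 1 ≤ bb a := by simp [bb]
    rcases lt_trichotomy j (bb a - 1) with hj | hj | hj
    · have h1 : (hh a x).testBit (2^(j+1)-1) = (hh a y).testBit (2^(j+1)-1) := by rw [hxy]
      rw [hbit x hx, hbit y hy, decide_eq_decide] at h1
      have hiff : (x.testBit j = true) ↔ (y.testBit j = true) :=
        (mem_Tset_pow ha hx hj).symm.trans (h1.trans (mem_Tset_pow ha hy hj))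
      by_cases hc : x.testBit j = true
      · rw [hc, hiff.mp hc]
      · simp only [Bool.not_eq_true] at hc
        have hyc : y.testBit j = false := by
          cases hYB : y.testBit j
          · rfl
          · rw [hiff.mpr hYB] at hc; exact absurd hc (by simp)
        rw [hc, hyc]
    · subst hj
      have h1 : (hh a x).testBit 0 = (hh a y).testBit 0 := by rw [hxy]
      rw [hbit x hx, hbit y hy, decide_eq_decide] at h1
      have hiff : (x.testBit (bb a - 1) = true) ↔ (y.testBit (bb a - 1) = true) :=
        (mem_Tset_zero ha hx).symm.trans (h1.trans (mem_Tset_zero ha hy))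
      by_cases hc : x.testBit (bb a - 1) = true
      · rw [hc, hiff.mp hc]
      · simp only [Bool.not_eq_true] at hc
        have hyc : y.testBit (bb a - 1) = false := by
          cases hYB : y.testBit (bb a - 1)
          · rfl
          · rw [hiff.mpr hYB] at hc; exact absurd hc (by simp)
        rw [hc, hyc]
    · have hjb : bb a ≤ j := by omega
      have hxlt : x < 2^j := lt_of_le_of_lt hx.2.1
        (lt_of_lt_of_le (lt_pow_bb a) (Nat.pow_le_pow_right (by norm_num) hjb))
      have hylt : y < 2^j := lt_of_le_of_lt hy.2.1
        (lt_of_lt_of_le (lt_pow_bb a) (Nat.pow_le_pow_right (by norm_num) hjb))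
      rw [Nat.testBit_lt_two_pow hxlt, Nat.testBit_lt_two_pow hylt]
  · intro x hx
    have hwt : wt a (hh a x) = (Tset a x).card := by
      rw [wt]
      congr 1
      ext i
      simp only [Finset.mem_filter, Finset.mem_range, hbit x hx, decide_eq_true_eq]
      constructor
      · rintro ⟨_, h⟩; exact h
      · intro h
        exact ⟨Finset.mem_range.mp (Tset_subset ha hx h), h⟩
    rw [hwt, card_Tset ha hx, wt_eq_of_mem ha hx, add_assoc]
end

section
/- Let M_a' = h(M_a) ⊂ F_2^a, where h(x) = 2^{f(x)-1} + Σ_{j=0}^{b-2} x_j 2^{2^{j+1}-1} + x_{b-1}. Then the elements of M_a' are linearly independent over F_2, so the F_2-span S of M_a' has dimension a - b, where |M_a| = a - b. -/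
open scoped Classical

namespace MaAux

variable {a : ℕ}

lemma bb_ge (ha : 2 ≤ a) : 2 ≤ bb a := by
  have h1 : 1 ≤ Nat.log 2 a := (Nat.le_log_iff_pow_le one_lt_two (by omega)).mpr (by simpa using ha)
  simp only [bb]; omega

lemma lt_pow (a : ℕ) : a < 2 ^ bb a := Nat.lt_pow_succ_log_self one_lt_two a

lemma pow_le (ha : 2 ≤ a) : 2 ^ (bb a - 1) ≤ a := by
  have : bb a - 1 = Nat.log 2 a := by simp [bb]
  rw [this]; exact Nat.pow_log_le_self 2 (by omega)

lemma pow_bb (ha : 2 ≤ a) : 2 ^ bb a = 2 * 2 ^ (bb a - 1) := by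
  have h := bb_ge ha
  conv_lhs => rw [show bb a = (bb a - 1) + 1 from by omega]
  rw [pow_succ, Nat.mul_comm]

lemma mm_eq (ha : 2 ≤ a) : a + 1 + mm a = 2 ^ bb a := by
  have := lt_pow a; simp only [mm]; omega

lemma testBit_top (ha : 2 ≤ a) {x : ℕ} (hx : x < 2 ^ bb a) :
    x.testBit (bb a - 1) = decide (2 ^ (bb a - 1) ≤ x) := by
  have h2 : 2 ^ bb a = 2 ^ (bb a - 1) * 2 := by rw [pow_bb ha]; ring
  have hP : 0 < 2 ^ (bb a - 1) := Nat.pow_pos (by norm_num)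
  rw [Nat.testBit_eq_decide_div_mod_eq]
  have hlt : x / 2 ^ (bb a - 1) < 2 := Nat.div_lt_of_lt_mul (by omega)
  rcases Nat.lt_or_ge x (2 ^ (bb a - 1)) with h | h
  · rw [Nat.div_eq_of_lt h]
    have : ¬ 2 ^ (bb a - 1) ≤ x := by omega
    simp [this]
  · have h1 : 1 ≤ x / 2 ^ (bb a - 1) := (Nat.one_le_div_iff hP).mpr h
    have hx1 : x / 2 ^ (bb a - 1) = 1 := by omega
    rw [hx1]; simp [h]

lemma odd_not_pow {n : ℕ} (h1 : n % 2 = 1) (h3 : 3 ≤ n) : ¬ ∃ k, n = 2 ^ k := by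
  rintro ⟨k, rfl⟩
  cases k with
  | zero => simp at h3
  | succ k => rw [pow_succ, Nat.mul_mod_left] at h1; exact absurd h1 (by norm_num)

lemma double_not_pow {x : ℕ} (hx : 0 < x) (h : ¬ ∃ k, x = 2 ^ k) : ¬ ∃ k, 2 * x = 2 ^ k := by
  rintro ⟨k, hk⟩
  cases k with
  | zero => rw [pow_zero] at hk; omega
  | succ k => exact h ⟨k, by rw [pow_succ] at hk; omega⟩

lemma ff_spec (ha : 2 ≤ a) {x : ℕ} (hx : x ∈ Ma a) :
    (2 * x ≤ a ∧ ff a x = 2 * x) ∨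
    (2 * x ≤ 2 ^ bb a - 2 ∧ a < 2 * x ∧ ff a x + 2 * ((mm a + 1) / 2) = 2 * x + 1) ∨
    (2 ^ (bb a - 1) < x ∧ ff a x + 2 ^ bb a = 2 * x + 1) := by
  obtain ⟨hx1, hx2, hx3⟩ := hx
  have hP := pow_le ha
  have hlt := lt_pow a
  have hm := mm_eq ha
  have h2P := pow_bb ha
  have hxlt : x < 2 ^ bb a := by omega
  by_cases htop : 2 ^ (bb a - 1) ≤ x
  · right; right
    have hxP : 2 ^ (bb a - 1) < x := by
      rcases Nat.lt_or_ge (2 ^ (bb a - 1)) x with h | h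
      · exact h
      · exfalso; exact hx3 ⟨bb a - 1, by omega⟩
    have hg : gg a x = 2 * x + 1 - 2 ^ bb a := by
      unfold gg; rw [testBit_top ha hxlt]; simp [htop]
    have hgm : gg a x ∈ Ma a := by
      refine ⟨by omega, by omega, ?_⟩
      exact odd_not_pow (by omega) (by omega)
    refine ⟨hxP, ?_⟩
    unfold ff ff'; rw [if_pos hgm, hg]; omega
  · have hg : gg a x = 2 * x := by
      unfold gg; rw [testBit_top ha hxlt]; simp [htop]
    by_cases hle : 2 * x ≤ a
    · left
      have hgm : gg a x ∈ Ma a := by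
        rw [hg]; exact ⟨by omega, hle, double_not_pow hx1 hx3⟩
      refine ⟨hle, ?_⟩
      unfold ff ff'; rw [if_pos hgm, hg]
    · right; left
      have hgm : gg a x ∉ Ma a := by rw [hg]; intro h; exact hle h.2.1
      have he : 2 * ((mm a + 1) / 2) ≤ mm a + 1 := by omega
      refine ⟨by omega, by omega, ?_⟩
      unfold ff ff'; rw [if_neg hgm, hg]; omega

lemma ff_mem (ha : 2 ≤ a) {x : ℕ} (hx : x ∈ Ma a) : ff a x ∈ Ma a := by
  obtain ⟨hx1, hx2, hx3⟩ := hx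
  have hP := pow_le ha
  have hlt := lt_pow a
  have hm := mm_eq ha
  have h2P := pow_bb ha
  rcases ff_spec ha ⟨hx1, hx2, hx3⟩ with ⟨h1, h2⟩ | ⟨h1, h2, h3⟩ | ⟨h1, h2⟩
  · exact ⟨by omega, by omega, by rw [h2]; exact double_not_pow hx1 hx3⟩
  · exact ⟨by omega, by omega, odd_not_pow (by omega) (by omega)⟩
  · exact ⟨by omega, by omega, odd_not_pow (by omega) (by omega)⟩

lemma ff_injOn (ha : 2 ≤ a) {x y : ℕ} (hx : x ∈ Ma a) (hy : y ∈ Ma a)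
    (h : ff a x = ff a y) : x = y := by
  obtain ⟨hx1, hx2, hx3⟩ := hx
  obtain ⟨hy1, hy2, hy3⟩ := hy
  have hP := pow_le ha
  have hlt := lt_pow a
  have hm := mm_eq ha
  have h2P := pow_bb ha
  rcases ff_spec ha ⟨hx1, hx2, hx3⟩ with ⟨a1, a2⟩ | ⟨a1, a2, a3⟩ | ⟨a1, a2⟩ <;>
    rcases ff_spec ha ⟨hy1, hy2, hy3⟩ with ⟨b1, b2⟩ | ⟨b1, b2, b3⟩ | ⟨b1, b2⟩ <;>
    omega

lemma ff_ge_three (ha : 2 ≤ a) {x : ℕ} (hx : x ∈ Ma a) : 3 ≤ ff a x := by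
  obtain ⟨h1, h2, h3⟩ := ff_mem ha hx
  have e1 : ff a x ≠ 1 := fun h => h3 ⟨0, by norm_num [h]⟩
  have e2 : ff a x ≠ 2 := fun h => h3 ⟨1, by norm_num [h]⟩
  omega


lemma sum_pow_lt (ε : ℕ → ℕ) (hε : ∀ p, ε p ≤ 1) (n : ℕ) :
    (∑ p ∈ Finset.range n, ε p * 2 ^ p) < 2 ^ n := by
  induction n with
  | zero => simp
  | succ n ih =>
    rw [Finset.sum_range_succ, pow_succ]
    have h1 : ε n * 2 ^ n ≤ 2 ^ n := by
      calc ε n * 2 ^ n ≤ 1 * 2 ^ n := Nat.mul_le_mul_right _ (hε n)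
        _ = 2 ^ n := one_mul _
    omega

lemma testBit_sum_range (n : ℕ) (ε : ℕ → ℕ) (hε : ∀ p, ε p ≤ 1) (q : ℕ) :
    (∑ p ∈ Finset.range n, ε p * 2 ^ p).testBit q = (decide (q < n) && decide (ε q = 1)) := by
  induction n with
  | zero => simp
  | succ n ih =>
    rw [Finset.sum_range_succ]
    have hS := sum_pow_lt ε hε n
    rw [show (∑ p ∈ Finset.range n, ε p * 2 ^ p) + ε n * 2 ^ n
        = 2 ^ n * ε n + ∑ p ∈ Finset.range n, ε p * 2 ^ p by ring]
    rw [Nat.testBit_two_pow_mul_add _ hS q]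
    by_cases hq : q < n
    · rw [if_pos hq, ih]
      have : q < n + 1 := by omega
      simp [hq, this]
    · rw [if_neg hq]
      rcases Nat.eq_or_lt_of_le (Nat.le_of_not_lt hq) with h | h
      · subst h
        have hε' : ε n = 0 ∨ ε n = 1 := by have := hε n; omega
        rcases hε' with h' | h' <;>
          simp [h', Nat.sub_self, Nat.lt_succ_self]
      · have h1 : ε n < 2 ^ (q - n) := by
          have : (1:ℕ) < 2 ^ (q - n) := by
            have : (2:ℕ)^1 ≤ 2 ^ (q - n) := Nat.pow_le_pow_right (by norm_num) (by omega)
            omega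
          have := hε n
          omega
        rw [Nat.testBit_lt_two_pow h1]
        have : ¬ q < n + 1 := by omega
        simp [this]

/-- coefficient function of `hh a x` in base `2`. -/
noncomputable def cf (a x p : ℕ) : ℕ :=
  (if p = ff a x - 1 then 1 else 0) +
  (∑ j ∈ Finset.range (bb a - 1), if p = 2 ^ (j + 1) - 1 then bitv x j else 0) +
  (if p = 0 then bitv x (bb a - 1) else 0)

lemma bitv_le (x j : ℕ) : bitv x j ≤ 1 := by unfold bitv; split <;> omega

lemma inner_sum_le (x p n : ℕ) :
    (∑ j ∈ Finset.range n, if p = 2 ^ (j + 1) - 1 then bitv x j else 0) ≤ 1 := by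
  induction n with
  | zero => simp
  | succ n ih =>
    rw [Finset.sum_range_succ]
    by_cases hp : p = 2 ^ (n + 1) - 1
    · have hz : (∑ j ∈ Finset.range n, if p = 2 ^ (j + 1) - 1 then bitv x j else 0) = 0 := by
        apply Finset.sum_eq_zero
        intro j hj
        rw [if_neg]
        intro hpj
        have : (2:ℕ) ^ (j + 1) < 2 ^ (n + 1) :=
          Nat.pow_lt_pow_right (by norm_num) (by simpa using Finset.mem_range.mp hj)
        have h1 : (1:ℕ) ≤ 2 ^ (j + 1) := Nat.one_le_two_pow
        omega
      rw [hz, if_pos hp, zero_add]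
      exact bitv_le x n
    · rw [if_neg hp, add_zero]; exact ih

lemma inner_sum_zero {x p : ℕ} (n : ℕ) (h : ∀ j, p ≠ 2 ^ (j + 1) - 1) :
    (∑ j ∈ Finset.range n, if p = 2 ^ (j + 1) - 1 then bitv x j else 0) = 0 :=
  Finset.sum_eq_zero fun j _ => if_neg (h j)

lemma ff_sub_one_props (ha : 2 ≤ a) {x : ℕ} (hx : x ∈ Ma a) :
    ff a x - 1 ≠ 0 ∧ (∀ j, ff a x - 1 ≠ 2 ^ (j + 1) - 1) ∧ ff a x - 1 < a := by
  have h3 := ff_ge_three ha hx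
  obtain ⟨h1, h2, hnp⟩ := ff_mem ha hx
  refine ⟨by omega, ?_, by omega⟩
  intro j hj
  apply hnp
  refine ⟨j + 1, ?_⟩
  have : (1:ℕ) ≤ 2 ^ (j + 1) := Nat.one_le_two_pow
  omega

lemma cf_le (ha : 2 ≤ a) {x : ℕ} (hx : x ∈ Ma a) (p : ℕ) : cf a x p ≤ 1 := by
  obtain ⟨hne0, hnej, _⟩ := ff_sub_one_props ha hx
  unfold cf
  by_cases h1 : p = ff a x - 1
  · rw [if_pos h1, inner_sum_zero _ (by rw [h1]; exact hnej), if_neg (by rw [h1]; exact hne0)]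
  · rw [if_neg h1]
    by_cases h0 : p = 0
    · rw [inner_sum_zero _ (fun j => by
        have : (1:ℕ) ≤ 2 ^ (j + 1) := Nat.one_le_two_pow
        have : (2:ℕ) ≤ 2 ^ (j + 1) := by
          calc (2:ℕ) = 2 ^ 1 := rfl
            _ ≤ 2 ^ (j + 1) := Nat.pow_le_pow_right (by norm_num) (by omega)
        omega)]
      simpa [h0] using bitv_le x (bb a - 1)
    · rw [if_neg h0]
      simpa using inner_sum_le x p (bb a - 1)

lemma cf_self (ha : 2 ≤ a) {x : ℕ} (hx : x ∈ Ma a) : cf a x (ff a x - 1) = 1 := by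
  obtain ⟨hne0, hnej, _⟩ := ff_sub_one_props ha hx
  unfold cf
  rw [if_pos rfl, inner_sum_zero _ hnej, if_neg hne0]

lemma cf_ne (ha : 2 ≤ a) {x : ℕ} (hx : x ∈ Ma a) {q : ℕ} (hq : q ≠ ff a x - 1)
    (h0 : q ≠ 0) (hj : ∀ j, q ≠ 2 ^ (j + 1) - 1) : cf a x q = 0 := by
  unfold cf
  rw [if_neg hq, inner_sum_zero _ hj, if_neg h0]

lemma hh_eq (ha : 2 ≤ a) {x : ℕ} (hx : x ∈ Ma a) :
    hh a x = ∑ p ∈ Finset.range a, cf a x p * 2 ^ p := by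
  obtain ⟨_, _, hfa⟩ := ff_sub_one_props ha hx
  have hP := pow_le ha
  unfold cf
  simp only [add_mul, Finset.sum_add_distrib]
  have e1 : (∑ p ∈ Finset.range a, (if p = ff a x - 1 then 1 else 0) * 2 ^ p)
      = 2 ^ (ff a x - 1) := by
    simp only [ite_mul, one_mul, zero_mul]
    rw [Finset.sum_ite_eq' (Finset.range a) (ff a x - 1) (fun p => 2 ^ p)]
    simp [Finset.mem_range.mpr hfa]
  have e3 : (∑ p ∈ Finset.range a, (if p = 0 then bitv x (bb a - 1) else 0) * 2 ^ p)
      = bitv x (bb a - 1) := by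
    simp only [ite_mul, zero_mul]
    rw [Finset.sum_ite_eq' (Finset.range a) 0 (fun p => bitv x (bb a - 1) * 2 ^ p)]
    simp [Finset.mem_range.mpr (by omega : 0 < a)]
  have e2 : (∑ p ∈ Finset.range a,
      (∑ j ∈ Finset.range (bb a - 1), if p = 2 ^ (j + 1) - 1 then bitv x j else 0) * 2 ^ p)
      = ∑ j ∈ Finset.range (bb a - 1), bitv x j * 2 ^ (2 ^ (j + 1) - 1) := by
    simp only [Finset.sum_mul]
    rw [Finset.sum_comm]
    apply Finset.sum_congr rfl
    intro j hj
    simp only [ite_mul, zero_mul]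
    rw [Finset.sum_ite_eq' (Finset.range a) (2 ^ (j + 1) - 1) (fun p => bitv x j * 2 ^ p)]
    have hjm : 2 ^ (j + 1) - 1 ∈ Finset.range a := by
      rw [Finset.mem_range]
      have hjb : j + 1 ≤ bb a - 1 := by simpa using Finset.mem_range.mp hj
      have : (2:ℕ) ^ (j + 1) ≤ 2 ^ (bb a - 1) := Nat.pow_le_pow_right (by norm_num) hjb
      have h1 : (1:ℕ) ≤ 2 ^ (j + 1) := Nat.one_le_two_pow
      omega
    simp [hjm]
  rw [e1, e2, e3]
  rfl

lemma hh_testBit (ha : 2 ≤ a) {x : ℕ} (hx : x ∈ Ma a) (q : ℕ) :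
    (hh a x).testBit q = (decide (q < a) && decide (cf a x q = 1)) := by
  rw [hh_eq ha hx, testBit_sum_range a _ (cf_le ha hx) q]

lemma hh_testBit_self (ha : 2 ≤ a) {x : ℕ} (hx : x ∈ Ma a) :
    (hh a x).testBit (ff a x - 1) = true := by
  obtain ⟨_, _, hfa⟩ := ff_sub_one_props ha hx
  rw [hh_testBit ha hx, cf_self ha hx]
  simp [hfa]

lemma hh_testBit_ne (ha : 2 ≤ a) {x y : ℕ} (hx : x ∈ Ma a) (hy : y ∈ Ma a)
    (hne : ff a y ≠ ff a x) : (hh a y).testBit (ff a x - 1) = false := by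
  obtain ⟨hx0, hxj, hxa⟩ := ff_sub_one_props ha hx
  have h3x := ff_ge_three ha hx
  have h3y := ff_ge_three ha hy
  rw [hh_testBit ha hy, cf_ne ha hy (by omega) hx0 hxj]
  simp

lemma hh_injOn (ha : 2 ≤ a) {x y : ℕ} (hx : x ∈ Ma a) (hy : y ∈ Ma a)
    (h : hh a x = hh a y) : x = y := by
  by_cases hf : ff a y = ff a x
  · exact (ff_injOn ha hy hx hf).symm
  · have h1 := hh_testBit_self ha hx
    have h2 := hh_testBit_ne ha hx hy hf
    rw [h, h2] at h1
    exact absurd h1 (by simp)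


lemma Ma_ncard (ha : 2 ≤ a) : (Ma a).ncard = a - bb a := by
  classical
  have hset : Ma a = ↑((Finset.Icc 1 a).filter fun x => ¬ ∃ k, x = 2 ^ k) := by
    ext x
    simp only [Ma, Set.mem_setOf_eq, Finset.coe_filter, Finset.mem_Icc]
    constructor
    · rintro ⟨h1, h2, h3⟩; exact ⟨⟨h1, h2⟩, h3⟩
    · rintro ⟨⟨h1, h2⟩, h3⟩; exact ⟨h1, h2, h3⟩
  rw [hset, Set.ncard_coe_finset]
  have hsplit := Finset.card_filter_add_card_filter_not
    (s := Finset.Icc 1 a) (p := fun x => ∃ k, x = 2 ^ k)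
  have himg : (Finset.Icc 1 a).filter (fun x => ∃ k, x = 2 ^ k)
      = (Finset.range (bb a)).image (2 ^ ·) := by
    ext y
    simp only [Finset.mem_filter, Finset.mem_Icc, Finset.mem_image, Finset.mem_range]
    constructor
    · rintro ⟨⟨h1, h2⟩, k, rfl⟩
      refine ⟨k, ?_, rfl⟩
      have : k ≤ Nat.log 2 a := (Nat.le_log_iff_pow_le one_lt_two (by omega)).mpr h2
      simp only [bb]; omega
    · rintro ⟨k, hk, rfl⟩
      refine ⟨⟨Nat.one_le_two_pow, ?_⟩, k, rfl⟩
      have : k ≤ Nat.log 2 a := by simp only [bb] at hk; omega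
      exact (Nat.le_log_iff_pow_le one_lt_two (by omega)).mp this
  have hcard : ((Finset.range (bb a)).image (2 ^ ·)).card = bb a := by
    rw [Finset.card_image_of_injective _ (Nat.pow_right_injective (le_refl 2)),
      Finset.card_range]
  rw [himg, hcard, Nat.card_Icc] at hsplit
  omega

lemma Ma_finite (a : ℕ) : (Ma a).Finite :=
  Set.Finite.subset (Set.finite_Icc 1 a) (fun x hx => Set.mem_Icc.mpr ⟨hx.1, hx.2.1⟩)

lemma main_LI (ha : 2 ≤ a) :
    LinearIndependent (ZMod 2) (fun y : (hh a '' Ma a : Set ℕ) => toVec a (y : ℕ)) := by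
  rw [linearIndependent_iff']
  intro s g hsum i hi
  obtain ⟨y, x, hxM, hyx⟩ := i
  have hfa : ff a x - 1 < a := (ff_sub_one_props ha hxM).2.2
  have h0 := congrFun hsum ⟨ff a x - 1, hfa⟩
  rw [Finset.sum_apply] at h0
  simp only [Pi.smul_apply, Pi.zero_apply] at h0
  have hsingle : ∀ i' ∈ s, i' ≠ (⟨y, x, hxM, hyx⟩ : (hh a '' Ma a : Set ℕ)) →
      g i' • toVec a (i' : ℕ) ⟨ff a x - 1, hfa⟩ = 0 := by
    rintro ⟨y', x', hx'M, hy'x⟩ _ hne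
    have hffne : ff a x' ≠ ff a x := by
      intro hff
      have : x' = x := ff_injOn ha hx'M hxM hff
      apply hne
      apply Subtype.ext
      simp only
      rw [← hyx, ← hy'x, this]
    have hbit : (hh a x').testBit (ff a x - 1) = false := hh_testBit_ne ha hxM hx'M hffne
    simp only [toVec]
    rw [hy'x] at hbit
    rw [hbit]
    simp
  rw [Finset.sum_eq_single_of_mem _ hi hsingle] at h0
  have hbit : (y : ℕ).testBit (ff a x - 1) = true := by rw [← hyx]; exact hh_testBit_self ha hxM
  simp only [toVec, hbit, if_true, smul_eq_mul, mul_one] at h0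
  exact h0


end MaAux

/-- the elements of `M_a' = h(M_a)`, viewed in `F_2^a`, are linearly
independent over `F_2`, the span `S` has dimension `a - b`, and `|M_a| = a - b`. -/
theorem Ma'_linearIndependent (a : ℕ) (ha : 2 ≤ a) :
    LinearIndependent (ZMod 2) (fun y : (hh a '' Ma a : Set ℕ) => toVec a (y : ℕ)) ∧
    Module.finrank (ZMod 2) (Ssub a) = a - bb a ∧
    (Ma a).ncard = a - bb a := by
  have hLI := MaAux.main_LI ha
  refine ⟨hLI, ?_, MaAux.Ma_ncard ha⟩
  have hfin : ((hh a '' Ma a) : Set ℕ).Finite := (MaAux.Ma_finite a).image _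
  haveI := hfin.fintype
  have h1 : Ssub a = Submodule.span (ZMod 2)
      (Set.range fun y : (hh a '' Ma a : Set ℕ) => toVec a (y : ℕ)) := by
    unfold Ssub
    rw [Set.image_eq_range]
  rw [h1, finrank_span_eq_card hLI]
  have h2 : Fintype.card (hh a '' Ma a : Set ℕ) = (hh a '' Ma a).ncard := by
    rw [← Nat.card_coe_set_eq, Nat.card_eq_fintype_card]
  rw [h2, Set.ncard_image_of_injOn (fun x hx y hy h => MaAux.hh_injOn ha hx hy h), MaAux.Ma_ncard ha]
end
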